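/- arXiv:2406.06152 — 5 statements merged into one kernel-verified Lean document; each statement's English description precedes it below -/
import Mathlib

section
/- Every bivariate assignment valuation is M♮-concave. That is, if V is a finite set, w : V × {1,2} → ℝ, φ : V → ℤ_{>0}, Φ = Σ_{i∈V} φ(i), and f : T_Φ → ℝ is the assignment valuation represented by (V, w, φ), then f is M♮-concave. -/
open Finset

/-- Embedding of `ℤ²` into `ℝ²`. -/
def toR (x : Fin 2 → ℤ) : Fin 2 → ℝ := fun j => (x j : ℝ)

/-- `chi none = χ₀` is the zero vector, `chi (some i) = χ_i` is the `i`-th unit vector. -/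
def chi : Option (Fin 2) → (Fin 2 → ℤ)
  | none => 0
  | some i => Pi.single i 1

/-- A set `S ⊆ ℤ²` is M♮-convex if for all `x, y ∈ S` and every index `i` with `x^i > y^i`
there exists `j` with `x^j < y^j` or `j = 0` such that `x − χ_i + χ_j ∈ S` and
`y + χ_i − χ_j ∈ S`. -/
def MnConvexSet (S : Set (Fin 2 → ℤ)) : Prop :=
  ∀ x ∈ S, ∀ y ∈ S, ∀ i : Fin 2, y i < x i →
    ∃ j : Option (Fin 2), (∀ j', j = some j' → x j' < y j') ∧
      x - Pi.single i 1 + chi j ∈ S ∧ y + Pi.single i 1 - chi j ∈ S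

/-- `T_Φ = { x ∈ ℤ²_{≥0} : x¹ + x² ≤ Φ }`. -/
def TPhi (Φ : ℤ) : Set (Fin 2 → ℤ) := {x | 0 ≤ x 0 ∧ 0 ≤ x 1 ∧ x 0 + x 1 ≤ Φ}

/-- M♮-concavity of a function on `T_Φ` (exchange property of its extension by `−∞`). -/
def MnConcaveOn (Φ : ℤ) (f : (Fin 2 → ℤ) → ℝ) : Prop :=
  ∀ x ∈ TPhi Φ, ∀ y ∈ TPhi Φ, ∀ i : Fin 2, y i < x i →
    ∃ j : Option (Fin 2), (∀ j', j = some j' → x j' < y j') ∧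
      x - Pi.single i 1 + chi j ∈ TPhi Φ ∧ y + Pi.single i 1 - chi j ∈ TPhi Φ ∧
      f x + f y ≤ f (x - Pi.single i 1 + chi j) + f (y + Pi.single i 1 - chi j)

noncomputable def lam1 (S : Set (Fin 2 → ℤ)) : ℤ := sInf ((fun x => x 0) '' S)
noncomputable def mu1 (S : Set (Fin 2 → ℤ)) : ℤ := sSup ((fun x => x 0) '' S)
noncomputable def lam2 (S : Set (Fin 2 → ℤ)) : ℤ := sInf ((fun x => x 1) '' S)
noncomputable def mu2 (S : Set (Fin 2 → ℤ)) : ℤ := sSup ((fun x => x 1) '' S)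
noncomputable def lam0 (S : Set (Fin 2 → ℤ)) : ℤ := sInf ((fun x => x 0 + x 1) '' S)
noncomputable def mu0 (S : Set (Fin 2 → ℤ)) : ℤ := sSup ((fun x => x 0 + x 1) '' S)

/-- Boundedness of a subset of `ℤ²`. -/
def BoundedSet (S : Set (Fin 2 → ℤ)) : Prop := ∃ M : ℤ, ∀ x ∈ S, |x 0| ≤ M ∧ |x 1| ≤ M

/-- The quantity `ℓ_LH(S) − ℓ_UH(S) = (μ₁ − (λ₀ − λ₂)) − ((μ₀ − μ₂) − λ₁)`;
`S` is of positive-type if it is `> 0`, of zero-type if it equals `0`, and of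
negative-type if it is `< 0`. -/
noncomputable def typeQ (S : Set (Fin 2 → ℤ)) : ℤ :=
  (mu1 S - (lam0 S - lam2 S)) - ((mu0 S - mu2 S) - lam1 S)

/-- `⟨p,x⟩ = p¹x¹ + p²x²`. -/
def inner2 (p : Fin 2 → ℝ) (x : Fin 2 → ℤ) : ℝ := p 0 * x 0 + p 1 * x 1

/-- The maximizer set `D_f(p)`. -/
def maximizerSet (Φ : ℤ) (f : (Fin 2 → ℤ) → ℝ) (p : Fin 2 → ℝ) : Set (Fin 2 → ℤ) :=
  {x | x ∈ TPhi Φ ∧ ∀ y ∈ TPhi Φ, f y - inner2 p y ≤ f x - inner2 p x}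

/-- A subset of `ℤ²` is two-dimensional if it is not contained in any affine line of `ℝ²`. -/
def TwoDimensional (S : Set (Fin 2 → ℤ)) : Prop :=
  ¬ ∃ a b c : ℝ, (a ≠ 0 ∨ b ≠ 0) ∧ ∀ x ∈ S, a * (x 0 : ℝ) + b * (x 1 : ℝ) = c

/-- Feasible assignments `y` for demand vector `x` and supplies `φ`. -/
def FeasibleAssign {V : Type} [Fintype V] (φ : V → ℤ) (x : Fin 2 → ℤ)
    (y : V → Fin 2 → ℤ) : Prop :=
  (∀ i j, 0 ≤ y i j) ∧ (∀ j, ∑ i, y i j = x j) ∧ (∀ i, y i 0 + y i 1 ≤ φ i)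

/-- `f` is the assignment valuation represented by `(V, w, φ)`. -/
def IsAssignmentValuation (Φ : ℤ) (f : (Fin 2 → ℤ) → ℝ) (V : Type) [Fintype V]
    (w : V → Fin 2 → ℝ) (φ : V → ℤ) : Prop :=
  (∀ i, 0 < φ i) ∧ (∑ i, φ i = Φ) ∧
  ∀ x ∈ TPhi Φ, IsGreatest
    {s : ℝ | ∃ y : V → Fin 2 → ℤ, FeasibleAssign φ x y ∧
       s = ∑ i, (w i 0 * (y i 0 : ℝ) + w i 1 * (y i 1 : ℝ))} (f x)

/-- A hexagonalization of `T_Φ`: nonempty M♮-convex sets covering `T_Φ` whose convex hulls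
have pairwise disjoint interiors. -/
def IsHexagonalization (Φ : ℤ) {q : ℕ} (H : Fin q → Set (Fin 2 → ℤ)) : Prop :=
  (∀ i, (H i).Nonempty) ∧ (∀ i, MnConvexSet (H i)) ∧ (⋃ i, H i) = TPhi Φ ∧
  ∀ i j : Fin q, i ≠ j →
    interior (convexHull ℝ (toR '' H i)) ∩ interior (convexHull ℝ (toR '' H j)) = ∅

/-- A feasible hexagonalization: every member is of positive- or zero-type, and at least one
member is of positive-type. -/
def IsFeasibleHex (Φ : ℤ) {q : ℕ} (H : Fin q → Set (Fin 2 → ℤ)) : Prop :=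
  IsHexagonalization Φ H ∧ (∀ i, 0 ≤ typeQ (H i)) ∧ ∃ i, 0 < typeQ (H i)

section Aux

variable {V : Type} [Fintype V] [DecidableEq V]

/-- The objective value of an assignment. -/
def objW (w : V → Fin 2 → ℝ) (a : V → Fin 2 → ℤ) : ℝ :=
  ∑ i, (w i 0 * (a i 0 : ℝ) + w i 1 * (a i 1 : ℝ))

/-- Perturb an assignment by `d` at `v` and by `e` at `u`. -/
def perturb (a : V → Fin 2 → ℤ) (v u : V) (d e : Fin 2 → ℤ) : V → Fin 2 → ℤ :=
  fun t j => a t j + ((if t = v then d j else 0) + (if t = u then e j else 0))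

lemma sum_perturb (a : V → Fin 2 → ℤ) (v u : V) (d e : Fin 2 → ℤ) (j : Fin 2) :
    ∑ t, perturb a v u d e t j = (∑ t, a t j) + (d j + e j) := by
  unfold perturb
  rw [Finset.sum_add_distrib, Finset.sum_add_distrib,
    Finset.sum_ite_eq' Finset.univ v (fun _ => d j),
    Finset.sum_ite_eq' Finset.univ u (fun _ => e j)]
  simp

lemma objW_perturb (w : V → Fin 2 → ℝ) (a : V → Fin 2 → ℤ) (v u : V) (d e : Fin 2 → ℤ) :
    objW w (perturb a v u d e) =
      objW w a + ((w v 0 * (d 0 : ℝ) + w v 1 * (d 1 : ℝ))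
        + (w u 0 * (e 0 : ℝ) + w u 1 * (e 1 : ℝ))) := by
  have key : ∀ t : V,
      w t 0 * ((perturb a v u d e t 0 : ℤ) : ℝ) + w t 1 * ((perturb a v u d e t 1 : ℤ) : ℝ)
      = (w t 0 * (a t 0 : ℝ) + w t 1 * (a t 1 : ℝ))
        + ((if t = v then w t 0 * (d 0 : ℝ) + w t 1 * (d 1 : ℝ) else 0)
          + (if t = u then w t 0 * (e 0 : ℝ) + w t 1 * (e 1 : ℝ) else 0)) := by
    intro t
    simp only [perturb]
    split_ifs <;> push_cast <;> ring
  unfold objW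
  rw [Finset.sum_congr rfl (fun t _ => key t), Finset.sum_add_distrib, Finset.sum_add_distrib,
    Finset.sum_add_distrib,
    Finset.sum_ite_eq' Finset.univ v (fun x => w x 0 * (d 0 : ℝ) + w x 1 * (d 1 : ℝ)),
    Finset.sum_ite_eq' Finset.univ u (fun x => w x 0 * (e 0 : ℝ) + w x 1 * (e 1 : ℝ))]
  simp

lemma pair_cases (i k : Fin 2) (hik : i ≠ k) : (i = 0 ∧ k = 1) ∨ (i = 1 ∧ k = 0) := by
  fin_cases i <;> fin_cases k <;> simp_all

lemma fin2_pair {i k : Fin 2} (hik : i ≠ k) (z : Fin 2 → ℤ) : z 0 + z 1 = z i + z k := by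
  rcases pair_cases i k hik with ⟨h1, h2⟩ | ⟨h1, h2⟩ <;> subst h1 <;> subst h2 <;> ring

lemma mem_TPhi_pair {Φ : ℤ} {i k : Fin 2} (hik : i ≠ k) (z : Fin 2 → ℤ) :
    z ∈ TPhi Φ ↔ 0 ≤ z i ∧ 0 ≤ z k ∧ z i + z k ≤ Φ := by
  rcases pair_cases i k hik with ⟨h1, h2⟩ | ⟨h1, h2⟩ <;> subst h1 <;> subst h2 <;>
    simp only [TPhi, Set.mem_setOf_eq] <;> constructor <;> rintro ⟨p1, p2, p3⟩ <;>
    exact ⟨by omega, by omega, by omega⟩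

lemma fin2_mem (i k j : Fin 2) (hik : i ≠ k) : j = i ∨ j = k := by
  fin_cases i <;> fin_cases k <;> fin_cases j <;> simp_all

lemma single_pairsum (i : Fin 2) : (Pi.single i 1 : Fin 2 → ℤ) 0 + (Pi.single i 1 : Fin 2 → ℤ) 1 = 1 := by
  fin_cases i <;> simp

lemma perturb_feasible_one (φ : V → ℤ) (x X : Fin 2 → ℤ) (a : V → Fin 2 → ℤ)
    (ha : FeasibleAssign φ x a) (v : V) (d : Fin 2 → ℤ)
    (hX : ∀ j, X j = x j + d j)
    (hv0 : ∀ j, 0 ≤ a v j + d j)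
    (hvc : a v 0 + a v 1 + (d 0 + d 1) ≤ φ v) :
    FeasibleAssign φ X (perturb a v v d 0) := by
  obtain ⟨h0, h1, h2⟩ := ha
  refine ⟨?_, ?_, ?_⟩
  · intro t j
    by_cases htv : t = v
    · rw [htv]; simpa [perturb] using hv0 j
    · simpa [perturb, htv] using h0 t j
  · intro j
    rw [sum_perturb, h1 j, hX j]; simp
  · intro t
    by_cases htv : t = v
    · rw [htv]
      have e1 : perturb a v v d 0 v 0 = a v 0 + d 0 := by simp [perturb]
      have e2 : perturb a v v d 0 v 1 = a v 1 + d 1 := by simp [perturb]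
      rw [e1, e2]; omega
    · have e1 : perturb a v v d 0 t 0 = a t 0 := by simp [perturb, htv]
      have e2 : perturb a v v d 0 t 1 = a t 1 := by simp [perturb, htv]
      rw [e1, e2]; exact h2 t

lemma perturb_feasible_two (φ : V → ℤ) (x X : Fin 2 → ℤ) (a : V → Fin 2 → ℤ)
    (ha : FeasibleAssign φ x a) (v u : V) (hvu : v ≠ u) (d e : Fin 2 → ℤ)
    (hX : ∀ j, X j = x j + (d j + e j))
    (hv0 : ∀ j, 0 ≤ a v j + d j)
    (hu0 : ∀ j, 0 ≤ a u j + e j)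
    (hvc : a v 0 + a v 1 + (d 0 + d 1) ≤ φ v)
    (huc : a u 0 + a u 1 + (e 0 + e 1) ≤ φ u) :
    FeasibleAssign φ X (perturb a v u d e) := by
  obtain ⟨h0, h1, h2⟩ := ha
  refine ⟨?_, ?_, ?_⟩
  · intro t j
    by_cases htv : t = v
    · rw [htv]; simpa [perturb, hvu] using hv0 j
    · by_cases htu : t = u
      · rw [htu]
        have huv : ¬ u = v := htu ▸ htv
        simpa [perturb, huv] using hu0 j
      · simpa [perturb, htv, htu] using h0 t j
  · intro j
    rw [sum_perturb, h1 j, hX j]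
  · intro t
    by_cases htv : t = v
    · rw [htv]
      have e1 : perturb a v u d e v 0 = a v 0 + d 0 := by simp [perturb, hvu]
      have e2 : perturb a v u d e v 1 = a v 1 + d 1 := by simp [perturb, hvu]
      rw [e1, e2]; omega
    · by_cases htu : t = u
      · rw [htu]
        have huv : ¬ u = v := htu ▸ htv
        have e1 : perturb a v u d e u 0 = a u 0 + e 0 := by simp [perturb, huv]
        have e2 : perturb a v u d e u 1 = a u 1 + e 1 := by simp [perturb, huv]
        rw [e1, e2]; omega
      · have e1 : perturb a v u d e t 0 = a t 0 := by simp [perturb, htv, htu]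
        have e2 : perturb a v u d e t 1 = a t 1 := by simp [perturb, htv, htu]
        rw [e1, e2]; exact h2 t

end Aux

lemma key_exchange (Φ : ℤ) (f : (Fin 2 → ℤ) → ℝ) (V : Type) [Fintype V]
    (w : V → Fin 2 → ℝ) (φ : V → ℤ) (h : IsAssignmentValuation Φ f V w φ)
    (x y : Fin 2 → ℤ) (hx : x ∈ TPhi Φ) (hy : y ∈ TPhi Φ) (i k : Fin 2) (hik : i ≠ k)
    (hlt : y i < x i) :
    ∃ j : Option (Fin 2), (∀ j', j = some j' → x j' < y j') ∧
      x - Pi.single i 1 + chi j ∈ TPhi Φ ∧ y + Pi.single i 1 - chi j ∈ TPhi Φ ∧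
      f x + f y ≤ f (x - Pi.single i 1 + chi j) + f (y + Pi.single i 1 - chi j) := by
  classical
  obtain ⟨hφpos, hΦsum, hval⟩ := h
  obtain ⟨⟨a, ha, hfa⟩, hxub⟩ := hval x hx
  obtain ⟨⟨b, hb, hfb⟩, hyub⟩ := hval y hy
  obtain ⟨ha0, ha1, ha2⟩ := ha
  obtain ⟨hb0, hb1, hb2⟩ := hb
  have sii : (Pi.single i 1 : Fin 2 → ℤ) i = 1 := Pi.single_eq_same i 1
  have sik : (Pi.single i 1 : Fin 2 → ℤ) k = 0 := Pi.single_eq_of_ne hik.symm 1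
  have skk : (Pi.single k 1 : Fin 2 → ℤ) k = 1 := Pi.single_eq_same k 1
  have ski : (Pi.single k 1 : Fin 2 → ℤ) i = 0 := Pi.single_eq_of_ne hik 1
  obtain ⟨hxi0, hxk0, hxs⟩ := (mem_TPhi_pair hik x).mp hx
  obtain ⟨hyi0, hyk0, hys⟩ := (mem_TPhi_pair hik y).mp hy
  have ha2' : ∀ t, a t i + a t k ≤ φ t := fun t => by
    rw [← fin2_pair hik]; exact ha2 t
  have hb2' : ∀ t, b t i + b t k ≤ φ t := fun t => by
    rw [← fin2_pair hik]; exact hb2 t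
  have hysum_eq : y i + y k = ∑ t, (b t i + b t k) := by
    rw [Finset.sum_add_distrib, hb1 i, hb1 k]
  -- the main reduction: produce the answer from explicit assignments
  have main : ∀ (j : Option (Fin 2)), (∀ j', j = some j' → x j' < y j') →
      ∀ a' b' : V → Fin 2 → ℤ,
      FeasibleAssign φ (x - Pi.single i 1 + chi j) a' →
      FeasibleAssign φ (y + Pi.single i 1 - chi j) b' →
      (x - Pi.single i 1 + chi j) ∈ TPhi Φ → (y + Pi.single i 1 - chi j) ∈ TPhi Φ →
      objW w a + objW w b ≤ objW w a' + objW w b' →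
      ∃ j : Option (Fin 2), (∀ j', j = some j' → x j' < y j') ∧
        x - Pi.single i 1 + chi j ∈ TPhi Φ ∧ y + Pi.single i 1 - chi j ∈ TPhi Φ ∧
        f x + f y ≤ f (x - Pi.single i 1 + chi j) + f (y + Pi.single i 1 - chi j) := by
    intro j hj a' b' hfa' hfb' hm1 hm2 hobj
    refine ⟨j, hj, hm1, hm2, ?_⟩
    have h1 : objW w a' ≤ f (x - Pi.single i 1 + chi j) :=
      (hval _ hm1).2 ⟨a', hfa', rfl⟩
    have h2 : objW w b' ≤ f (y + Pi.single i 1 - chi j) :=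
      (hval _ hm2).2 ⟨b', hfb', rfl⟩
    have hfa' : f x = objW w a := hfa
    have hfb' : f y = objW w b := hfb
    rw [hfa', hfb']
    linarith
  have hvex : ∃ v, b v i < a v i := by
    have : ∑ t, b t i < ∑ t, a t i := by rw [hb1 i, ha1 i]; exact hlt
    obtain ⟨v, _, hv⟩ := Finset.exists_lt_of_sum_lt this
    exact ⟨v, hv⟩
  by_cases hP : ∃ v, b v i < a v i ∧ b v i + b v k < φ v
  · -- Case 1 : j = none, single-cell exchange
    obtain ⟨v, hv1, hv2⟩ := hP
    have hyslack : y i + y k < Φ := by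
      rw [hysum_eq, ← hΦsum]
      exact Finset.sum_lt_sum (fun t _ => hb2' t) ⟨v, Finset.mem_univ v, hv2⟩
    have hbvi := hb0 v i
    have havk := ha0 v k
    refine main none (fun _ h => nomatch h)
      (perturb a v v (fun j => -((Pi.single i 1 : Fin 2 → ℤ) j)) 0)
      (perturb b v v (fun j => (Pi.single i 1 : Fin 2 → ℤ) j) 0) ?_ ?_ ?_ ?_ ?_
    · refine perturb_feasible_one φ x _ a ⟨ha0, ha1, ha2⟩ v _ ?_ ?_ ?_
      · intro j; simp [chi]; try ring
      · intro j
        rcases fin2_mem i k j hik with rfl | rfl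
        · rw [sii]; omega
        · rw [sik]; omega
      · have hs := single_pairsum i
        have := ha2 v
        omega
    · refine perturb_feasible_one φ y _ b ⟨hb0, hb1, hb2⟩ v _ ?_ ?_ ?_
      · intro j; simp [chi]
      · intro j
        have := hb0 v j
        have : (0:ℤ) ≤ (Pi.single i 1 : Fin 2 → ℤ) j := by
          rcases fin2_mem i k j hik with rfl | rfl
          · rw [sii]; omega
          · rw [sik]
        omega
      · have hs := single_pairsum i
        have hp := fin2_pair hik (b v)
        omega
    · rw [mem_TPhi_pair hik]
      refine ⟨?_, ?_, ?_⟩ <;> simp [chi, sii, sik] <;> omega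
    · rw [mem_TPhi_pair hik]
      refine ⟨?_, ?_, ?_⟩ <;> simp [chi, sii, sik] <;> omega
    · apply le_of_eq
      simp only [objW_perturb, Pi.zero_apply]
      push_cast
      ring
  · push_neg at hP
    obtain ⟨v0, hv1⟩ := hvex
    have hsat : φ v0 ≤ b v0 i + b v0 k := hP v0 hv1
    have hak : a v0 k < b v0 k := by
      have := ha2' v0
      have := hb2' v0
      omega
    have hbv0i := hb0 v0 i
    have hav0k := ha0 v0 k
    have hav0i := ha0 v0 i
    by_cases hxk : x k < y k
    · -- Case 2a : j = some k, swap at v0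
      refine main (some k) (fun j' hj' => by cases hj'; exact hxk)
        (perturb a v0 v0 (fun j => (Pi.single k 1 : Fin 2 → ℤ) j - (Pi.single i 1 : Fin 2 → ℤ) j) 0)
        (perturb b v0 v0 (fun j => (Pi.single i 1 : Fin 2 → ℤ) j - (Pi.single k 1 : Fin 2 → ℤ) j) 0) ?_ ?_ ?_ ?_ ?_
      · refine perturb_feasible_one φ x _ a ⟨ha0, ha1, ha2⟩ v0 _ ?_ ?_ ?_
        · intro j; simp [chi]; try ring
        · intro j
          rcases fin2_mem i k j hik with rfl | rfl
          · rw [sii, ski]; omega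
          · rw [sik, skk]; omega
        · have hs1 := single_pairsum i
          have hs2 := single_pairsum k
          have := ha2 v0
          omega
      · refine perturb_feasible_one φ y _ b ⟨hb0, hb1, hb2⟩ v0 _ ?_ ?_ ?_
        · intro j; simp [chi]; try ring
        · intro j
          rcases fin2_mem i k j hik with rfl | rfl
          · rw [sii, ski]; omega
          · rw [sik, skk]; omega
        · have hs1 := single_pairsum i
          have hs2 := single_pairsum k
          have := hb2 v0
          omega
      · rw [mem_TPhi_pair hik]
        refine ⟨?_, ?_, ?_⟩ <;> simp [chi, sii, sik, skk, ski] <;> omega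
      · rw [mem_TPhi_pair hik]
        refine ⟨?_, ?_, ?_⟩ <;> simp [chi, sii, sik, skk, ski] <;> omega
      · apply le_of_eq
        simp only [objW_perturb, Pi.zero_apply]
        push_cast
        ring
    · -- Case 2b : x k ≥ y k
      push_neg at hxk
      by_cases hQ : ∃ u, b u k < a u k ∧ b u i + b u k < φ u
      · -- Case 2b-i : j = none, 3-cell exchange through v0 and u
        obtain ⟨u, hu1, hu2⟩ := hQ
        have hne : v0 ≠ u := by
          intro hvu
          rw [← hvu] at hu1
          omega
        have hyslack : y i + y k < Φ := by
          rw [hysum_eq, ← hΦsum]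
          exact Finset.sum_lt_sum (fun t _ => hb2' t) ⟨u, Finset.mem_univ u, hu2⟩
        have hbuk := hb0 u k
        have hbui := hb0 u i
        have haui := ha0 u i
        refine main none (fun _ h => nomatch h)
          (perturb a v0 u (fun j => (Pi.single k 1 : Fin 2 → ℤ) j - (Pi.single i 1 : Fin 2 → ℤ) j)
            (fun j => -((Pi.single k 1 : Fin 2 → ℤ) j)))
          (perturb b v0 u (fun j => (Pi.single i 1 : Fin 2 → ℤ) j - (Pi.single k 1 : Fin 2 → ℤ) j)
            (fun j => (Pi.single k 1 : Fin 2 → ℤ) j)) ?_ ?_ ?_ ?_ ?_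
        · refine perturb_feasible_two φ x _ a ⟨ha0, ha1, ha2⟩ v0 u hne _ _ ?_ ?_ ?_ ?_ ?_
          · intro j; simp [chi]; try ring
          · intro j
            rcases fin2_mem i k j hik with rfl | rfl
            · rw [sii, ski]; omega
            · rw [sik, skk]; omega
          · intro j
            rcases fin2_mem i k j hik with rfl | rfl
            · rw [ski]; omega
            · rw [skk]; omega
          · have hs1 := single_pairsum i
            have hs2 := single_pairsum k
            have := ha2 v0
            omega
          · have hs2 := single_pairsum k
            have := ha2 u
            omega
        · refine perturb_feasible_two φ y _ b ⟨hb0, hb1, hb2⟩ v0 u hne _ _ ?_ ?_ ?_ ?_ ?_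
          · intro j; simp [chi]; try ring
          · intro j
            rcases fin2_mem i k j hik with rfl | rfl
            · rw [sii, ski]; omega
            · rw [sik, skk]; omega
          · intro j
            rcases fin2_mem i k j hik with rfl | rfl
            · rw [ski]; omega
            · rw [skk]; omega
          · have hs1 := single_pairsum i
            have hs2 := single_pairsum k
            have := hb2 v0
            omega
          · have hs2 := single_pairsum k
            have hp := fin2_pair hik (b u)
            omega
        · rw [mem_TPhi_pair hik]
          refine ⟨?_, ?_, ?_⟩ <;> simp [chi, sii, sik] <;> omega
        · rw [mem_TPhi_pair hik]
          refine ⟨?_, ?_, ?_⟩ <;> simp [chi, sii, sik] <;> omega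
        · apply le_of_eq
          simp only [objW_perturb]
          push_cast
          ring
      · -- Case 2b-ii : contradiction
        exfalso
        push_neg at hQ
        have hAll : ∀ t, a t i + a t k ≤ b t i + b t k := by
          intro t
          by_cases h1 : b t i < a t i
          · exact le_trans (ha2' t) (hP t h1)
          · by_cases h2 : b t k < a t k
            · exact le_trans (ha2' t) (hQ t h2)
            · omega
        have hsum : x i + x k ≤ y i + y k := by
          have h1 : ∑ t, (a t i + a t k) ≤ ∑ t, (b t i + b t k) :=
            Finset.sum_le_sum (fun t _ => hAll t)
          rw [Finset.sum_add_distrib, Finset.sum_add_distrib, ha1 i, ha1 k,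
            hb1 i, hb1 k] at h1
          exact h1
        omega

theorem stmt7 (Φ : ℤ) (hΦ : 0 < Φ) (f : (Fin 2 → ℤ) → ℝ) (V : Type) [Fintype V]
    (w : V → Fin 2 → ℝ) (φ : V → ℤ) (h : IsAssignmentValuation Φ f V w φ) :
    MnConcaveOn Φ f := by
  intro x hx y hy i hlt
  have hik : i ≠ 1 - i := by fin_cases i <;> decide
  exact key_exchange Φ f V w φ h x y hx hy i (1 - i) hik hlt
end

section
/- Every bivariate assignment valuation has a unique irreducible representation: if (V, w, φ) and (V', w', φ') are both irreducible representations of the same function f : T_Φ → ℝ, then there exists a bijection σ : V → V' such that w'(σ(i), j) = w(i, j) for all i ∈ V and j ∈ {1,2}, and φ'(σ(i)) = φ(i) for all i ∈ V. -/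
open Finset

lemma hmaxA (x y : ℝ) (h1 : y ≤ x) (h2 : 0 ≤ x) : max x (max y 0) = x :=
  max_eq_left (max_le h1 h2)

lemma hmaxB (x y : ℝ) (h1 : x ≤ y) (h2 : 0 ≤ y) : max x (max y 0) = y := by
  rw [max_eq_left h2, max_eq_right h1]

lemma hmaxC (x y : ℝ) (h1 : x ≤ 0) (h2 : y ≤ 0) : max x (max y 0) = 0 := by
  rw [max_eq_right h2, max_eq_right h1]

lemma keyE (u v ε : ℝ) (hε : 0 < ε)
    (hu : u ≠ 0 → ε < |u|) (hv : v ≠ 0 → ε < |v|) (huv : u ≠ v → ε < |u - v|) :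
    (max (u+ε) (max (v+ε) 0) - max (u+ε) (max v 0) - max u (max (v+ε) 0))
      - (max (u-ε) (max (v-ε) 0) - max (u-ε) (max v 0) - max u (max (v-ε) 0))
      = if u = 0 ∧ v = 0 then -ε else 0 := by
  have hu3 : u = 0 ∨ ε < u ∨ u < -ε := by
    rcases eq_or_ne u 0 with h | h
    · exact Or.inl h
    · rcases lt_abs.mp (hu h) with h' | h'
      · exact Or.inr (Or.inl h')
      · exact Or.inr (Or.inr (by linarith))
  have hv3 : v = 0 ∨ ε < v ∨ v < -ε := by
    rcases eq_or_ne v 0 with h | h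
    · exact Or.inl h
    · rcases lt_abs.mp (hv h) with h' | h'
      · exact Or.inr (Or.inl h')
      · exact Or.inr (Or.inr (by linarith))
  rcases hu3 with hu0 | hup | hun
  · rcases hv3 with hv0 | hvp | hvn
    · subst hu0; subst hv0
      rw [if_pos ⟨rfl, rfl⟩]
      rw [hmaxA _ _ (by linarith) (by linarith), hmaxA _ _ (by linarith) (by linarith),
          hmaxB _ _ (by linarith) (by linarith), hmaxC _ _ (by linarith) (by linarith),
          hmaxC _ _ (by linarith) (by linarith), hmaxC _ _ (by linarith) (by linarith)]
      ring
    · subst hu0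
      rw [if_neg (by rintro ⟨h1, h2⟩; subst h2; linarith)]
      rw [hmaxB _ _ (by linarith) (by linarith), hmaxB _ _ (by linarith) (by linarith),
          hmaxB _ _ (by linarith) (by linarith), hmaxB _ _ (by linarith) (by linarith),
          hmaxB _ _ (by linarith) (by linarith), hmaxB _ _ (by linarith) (by linarith)]
      ring
    · subst hu0
      rw [if_neg (by rintro ⟨h1, h2⟩; subst h2; linarith)]
      rw [hmaxA _ _ (by linarith) (by linarith), hmaxA _ _ (by linarith) (by linarith),
          hmaxC _ _ (by linarith) (by linarith), hmaxC _ _ (by linarith) (by linarith),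
          hmaxC _ _ (by linarith) (by linarith), hmaxC _ _ (by linarith) (by linarith)]
      ring
  · rcases hv3 with hv0 | hvp | hvn
    · subst hv0
      rw [if_neg (by rintro ⟨h1, h2⟩; subst h1; linarith)]
      rw [hmaxA _ _ (by linarith) (by linarith), hmaxA _ _ (by linarith) (by linarith),
          hmaxA _ _ (by linarith) (by linarith), hmaxA _ _ (by linarith) (by linarith),
          hmaxA _ _ (by linarith) (by linarith), hmaxA _ _ (by linarith) (by linarith)]
      ring
    · rw [if_neg (by rintro ⟨h1, h2⟩; subst h1; linarith)]
      have huv3 : u = v ∨ ε < u - v ∨ ε < v - u := by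
        rcases eq_or_ne u v with h | h
        · exact Or.inl h
        · rcases lt_abs.mp (huv h) with h' | h'
          · exact Or.inr (Or.inl h')
          · exact Or.inr (Or.inr (by linarith))
      rcases huv3 with he | hgt | hlt
      · subst he
        rw [hmaxA _ _ (by linarith) (by linarith), hmaxA _ _ (by linarith) (by linarith),
            hmaxB _ _ (by linarith) (by linarith), hmaxA _ _ (by linarith) (by linarith),
            hmaxB _ _ (by linarith) (by linarith), hmaxA _ _ (by linarith) (by linarith)]
        ring
      · rw [hmaxA _ _ (by linarith) (by linarith), hmaxA _ _ (by linarith) (by linarith),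
            hmaxA _ _ (by linarith) (by linarith), hmaxA _ _ (by linarith) (by linarith),
            hmaxA _ _ (by linarith) (by linarith), hmaxA _ _ (by linarith) (by linarith)]
        ring
      · rw [hmaxB _ _ (by linarith) (by linarith), hmaxB _ _ (by linarith) (by linarith),
            hmaxB _ _ (by linarith) (by linarith), hmaxB _ _ (by linarith) (by linarith),
            hmaxB _ _ (by linarith) (by linarith), hmaxB _ _ (by linarith) (by linarith)]
        ring
    · rw [if_neg (by rintro ⟨h1, h2⟩; subst h1; linarith)]
      rw [hmaxA _ _ (by linarith) (by linarith), hmaxA _ _ (by linarith) (by linarith),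
          hmaxA _ _ (by linarith) (by linarith), hmaxA _ _ (by linarith) (by linarith),
          hmaxA _ _ (by linarith) (by linarith), hmaxA _ _ (by linarith) (by linarith)]
      ring
  · rcases hv3 with hv0 | hvp | hvn
    · subst hv0
      rw [if_neg (by rintro ⟨h1, h2⟩; subst h1; linarith)]
      rw [hmaxB _ _ (by linarith) (by linarith), hmaxC _ _ (by linarith) (by linarith),
          hmaxB _ _ (by linarith) (by linarith), hmaxC _ _ (by linarith) (by linarith),
          hmaxC _ _ (by linarith) (by linarith), hmaxC _ _ (by linarith) (by linarith)]
      ring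
    · rw [if_neg (by rintro ⟨h1, h2⟩; subst h1; linarith)]
      rw [hmaxB _ _ (by linarith) (by linarith), hmaxB _ _ (by linarith) (by linarith),
          hmaxB _ _ (by linarith) (by linarith), hmaxB _ _ (by linarith) (by linarith),
          hmaxB _ _ (by linarith) (by linarith), hmaxB _ _ (by linarith) (by linarith)]
      ring
    · rw [if_neg (by rintro ⟨h1, h2⟩; subst h1; linarith)]
      rw [hmaxC _ _ (by linarith) (by linarith), hmaxC _ _ (by linarith) (by linarith),
          hmaxC _ _ (by linarith) (by linarith), hmaxC _ _ (by linarith) (by linarith),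
          hmaxC _ _ (by linarith) (by linarith), hmaxC _ _ (by linarith) (by linarith)]
      ring

noncomputable def gfun {V : Type} [Fintype V] (w : V → Fin 2 → ℝ) (φ : V → ℤ)
    (p : Fin 2 → ℝ) : ℝ :=
  ∑ i, (φ i : ℝ) * max (w i 0 - p 0) (max (w i 1 - p 1) 0)

lemma lemA {Φ : ℤ} {f : (Fin 2 → ℤ) → ℝ} {V : Type} [Fintype V]
    {w : V → Fin 2 → ℝ} {φ : V → ℤ}
    (h : IsAssignmentValuation Φ f V w φ) (p : Fin 2 → ℝ) :
    IsGreatest {s : ℝ | ∃ x ∈ TPhi Φ, s = f x - inner2 p x} (gfun w φ p) := by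
  classical
  obtain ⟨hφ, hsum, hval⟩ := h
  -- upper bound
  have hub : ∀ x ∈ TPhi Φ, f x - inner2 p x ≤ gfun w φ p := by
    intro x hx
    obtain ⟨y, hy, hfx⟩ := (hval x hx).1
    have hx0 : ((x 0 : ℤ) : ℝ) = ∑ i, (y i 0 : ℝ) := by
      rw [← hy.2.1 0]; push_cast; rfl
    have hx1 : ((x 1 : ℤ) : ℝ) = ∑ i, (y i 1 : ℝ) := by
      rw [← hy.2.1 1]; push_cast; rfl
    have heq : f x - inner2 p x
        = ∑ i, ((w i 0 - p 0) * (y i 0 : ℝ) + (w i 1 - p 1) * (y i 1 : ℝ)) := by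
      rw [hfx, inner2, hx0, hx1, Finset.mul_sum, Finset.mul_sum,
        ← Finset.sum_add_distrib, ← Finset.sum_sub_distrib]
      exact Finset.sum_congr rfl (fun i _ => by ring)
    rw [heq, gfun]
    apply Finset.sum_le_sum
    intro i _
    set m := max (w i 0 - p 0) (max (w i 1 - p 1) 0) with hm
    have ha : w i 0 - p 0 ≤ m := le_max_left _ _
    have hb : w i 1 - p 1 ≤ m := le_trans (le_max_left _ _) (le_max_right _ _)
    have hm0 : (0:ℝ) ≤ m := le_trans (le_max_right _ _) (le_max_right _ _)
    have hy0' : (0:ℝ) ≤ (y i 0 : ℝ) := by exact_mod_cast hy.1 i 0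
    have hy1' : (0:ℝ) ≤ (y i 1 : ℝ) := by exact_mod_cast hy.1 i 1
    have hsy : (y i 0 : ℝ) + (y i 1 : ℝ) ≤ (φ i : ℝ) := by exact_mod_cast hy.2.2 i
    nlinarith [mul_nonneg (sub_nonneg.mpr ha) hy0', mul_nonneg (sub_nonneg.mpr hb) hy1',
      mul_nonneg hm0 (by linarith : (0:ℝ) ≤ (φ i : ℝ) - (y i 0 : ℝ) - (y i 1 : ℝ))]
  constructor
  · -- membership
    set y : V → Fin 2 → ℤ := fun i =>
      if max (w i 1 - p 1) 0 ≤ w i 0 - p 0 then ![φ i, 0]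
      else if 0 ≤ w i 1 - p 1 then ![0, φ i] else 0 with hydef
    have hy0 : ∀ i, y i 0 = if max (w i 1 - p 1) 0 ≤ w i 0 - p 0 then φ i else 0 := by
      intro i
      simp only [hydef, apply_ite (fun v : Fin 2 → ℤ => v 0), Matrix.cons_val_zero,
        Pi.zero_apply, ite_self]
    have hy1 : ∀ i, y i 1 = if max (w i 1 - p 1) 0 ≤ w i 0 - p 0 then 0
        else if 0 ≤ w i 1 - p 1 then φ i else 0 := by
      intro i
      simp only [hydef, apply_ite (fun v : Fin 2 → ℤ => v 1), Matrix.cons_val_one,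
        Matrix.head_cons, Pi.zero_apply, Matrix.cons_val_zero]
    set x : Fin 2 → ℤ := fun j => ∑ i, y i j with hxdef
    have hynn : ∀ i j, 0 ≤ y i j := by
      intro i j
      fin_cases j
      · show 0 ≤ y i 0
        rw [hy0 i]; split_ifs <;> first | exact (hφ i).le | exact le_rfl
      · show 0 ≤ y i 1
        rw [hy1 i]; split_ifs <;> first | exact (hφ i).le | exact le_rfl
    have hys : ∀ i, y i 0 + y i 1 ≤ φ i := by
      intro i
      have := hφ i
      rw [hy0 i, hy1 i]
      split_ifs <;> omega
    have hfeas : FeasibleAssign φ x y := ⟨hynn, fun j => rfl, hys⟩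
    have hxT : x ∈ TPhi Φ := by
      refine ⟨Finset.sum_nonneg fun i _ => hynn i 0, Finset.sum_nonneg fun i _ => hynn i 1, ?_⟩
      rw [← Finset.sum_add_distrib]
      calc ∑ i, (y i 0 + y i 1) ≤ ∑ i, φ i := Finset.sum_le_sum fun i _ => hys i
        _ = Φ := hsum
    -- value of y
    have hyval : (∑ i, (w i 0 * (y i 0 : ℝ) + w i 1 * (y i 1 : ℝ))) - inner2 p x
        = gfun w φ p := by
      have hx0 : ((x 0 : ℤ) : ℝ) = ∑ i, (y i 0 : ℝ) := by
        simp only [hxdef]; push_cast; rfl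
      have hx1 : ((x 1 : ℤ) : ℝ) = ∑ i, (y i 1 : ℝ) := by
        simp only [hxdef]; push_cast; rfl
      rw [inner2, hx0, hx1, Finset.mul_sum, Finset.mul_sum,
        ← Finset.sum_add_distrib, ← Finset.sum_sub_distrib, gfun]
      apply Finset.sum_congr rfl
      intro i _
      rw [hy0 i, hy1 i]
      by_cases h1 : max (w i 1 - p 1) 0 ≤ w i 0 - p 0
      · rw [if_pos h1, if_pos h1, max_eq_left h1]
        push_cast; ring
      · rw [if_neg h1, if_neg h1]
        by_cases h2 : 0 ≤ w i 1 - p 1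
        · rw [if_pos h2]
          have : max (w i 0 - p 0) (max (w i 1 - p 1) 0) = w i 1 - p 1 := by
            rw [max_eq_right (le_of_lt (not_le.mp h1)), max_eq_left h2]
          rw [this]; push_cast; ring
        · rw [if_neg h2]
          have h3 : max (w i 1 - p 1) 0 = 0 := max_eq_right (le_of_lt (not_le.mp h2))
          have h4 : max (w i 0 - p 0) (max (w i 1 - p 1) 0) = 0 := by
            rw [h3]; exact max_eq_right (by rw [h3] at h1; linarith [not_le.mp h1])
          rw [h4]; push_cast; ring
    have hle : (∑ i, (w i 0 * (y i 0 : ℝ) + w i 1 * (y i 1 : ℝ))) ≤ f x :=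
      (hval x hxT).2 ⟨y, hfeas, rfl⟩
    have h2 := hub x hxT
    exact ⟨x, hxT, le_antisymm (by linarith) (by linarith)⟩
  · rintro s ⟨x, hx, rfl⟩
    exact hub x hx

lemma eqc (a c : Fin 2 → ℝ) : (a 0 - c 0 = 0 ∧ a 1 - c 1 = 0) ↔ a = c := by
  constructor
  · rintro ⟨h0, h1⟩
    funext j
    fin_cases j
    · show a 0 = c 0; linarith
    · show a 1 = c 1; linarith
  · rintro rfl; simp

lemma comboEq {W : Type} [Fintype W] (ω : W → Fin 2 → ℝ) (ψ : W → ℤ) (c : Fin 2 → ℝ)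
    (ε : ℝ) (hε : 0 < ε)
    (hc : ∀ a : W, (ω a 0 - c 0 ≠ 0 → ε < |ω a 0 - c 0|) ∧ (ω a 1 - c 1 ≠ 0 → ε < |ω a 1 - c 1|) ∧
      (ω a 0 - c 0 ≠ ω a 1 - c 1 → ε < |(ω a 0 - c 0) - (ω a 1 - c 1)|)) :
    gfun ω ψ ![c 0 - ε, c 1 - ε] - gfun ω ψ ![c 0 - ε, c 1] - gfun ω ψ ![c 0, c 1 - ε]
      - (gfun ω ψ ![c 0 + ε, c 1 + ε] - gfun ω ψ ![c 0 + ε, c 1] - gfun ω ψ ![c 0, c 1 + ε])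
      = -ε * ∑ a ∈ univ.filter (fun a => ω a = c), (ψ a : ℝ) := by
  classical
  have hr : -ε * ∑ a ∈ univ.filter (fun a => ω a = c), (ψ a : ℝ)
      = ∑ a, (ψ a : ℝ) * (if ω a = c then -ε else 0) := by
    rw [Finset.mul_sum, Finset.sum_filter]
    exact Finset.sum_congr rfl (fun a _ => by split_ifs <;> ring)
  rw [hr]
  simp only [gfun, Matrix.cons_val_zero, Matrix.cons_val_one, Matrix.head_cons]
  rw [← Finset.sum_sub_distrib, ← Finset.sum_sub_distrib, ← Finset.sum_sub_distrib,
      ← Finset.sum_sub_distrib, ← Finset.sum_sub_distrib]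
  apply Finset.sum_congr rfl
  intro a _
  have hk := keyE (ω a 0 - c 0) (ω a 1 - c 1) ε hε (hc a).1 (hc a).2.1 (hc a).2.2
  simp only [eqc (ω a) c] at hk
  rw [show ω a 0 - (c 0 - ε) = (ω a 0 - c 0) + ε from by ring,
      show ω a 1 - (c 1 - ε) = (ω a 1 - c 1) + ε from by ring,
      show ω a 0 - (c 0 + ε) = (ω a 0 - c 0) - ε from by ring,
      show ω a 1 - (c 1 + ε) = (ω a 1 - c 1) - ε from by ring]
  linear_combination (ψ a : ℝ) * hk

lemma fiber {V V' : Type} [Fintype V] [Fintype V'] {w : V → Fin 2 → ℝ} {φ : V → ℤ}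
    {w' : V' → Fin 2 → ℝ} {φ' : V' → ℤ}
    (hg : ∀ p, gfun w φ p = gfun w' φ' p) (c : Fin 2 → ℝ) :
    ∑ i ∈ univ.filter (fun i => w i = c), φ i
      = ∑ j ∈ univ.filter (fun j => w' j = c), φ' j := by
  classical
  have hev1 : ∀ d : ℝ, ∀ᶠ ε in nhdsWithin (0:ℝ) (Set.Ioi 0), (d ≠ 0 → ε < |d|) := by
    intro d
    by_cases hd : d = 0
    · exact Filter.Eventually.of_forall (fun ε h => absurd hd h)
    · exact ((eventually_lt_nhds (abs_pos.mpr hd)).filter_mono nhdsWithin_le_nhds).mono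
        (fun ε h _ => h)
  obtain ⟨ε, hε, hc, hc'⟩ : ∃ ε : ℝ, 0 < ε
      ∧ (∀ a : V, (w a 0 - c 0 ≠ 0 → ε < |w a 0 - c 0|) ∧ (w a 1 - c 1 ≠ 0 → ε < |w a 1 - c 1|) ∧
          (w a 0 - c 0 ≠ w a 1 - c 1 → ε < |(w a 0 - c 0) - (w a 1 - c 1)|))
      ∧ (∀ a : V', (w' a 0 - c 0 ≠ 0 → ε < |w' a 0 - c 0|) ∧ (w' a 1 - c 1 ≠ 0 → ε < |w' a 1 - c 1|) ∧
          (w' a 0 - c 0 ≠ w' a 1 - c 1 → ε < |(w' a 0 - c 0) - (w' a 1 - c 1)|)) := by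
    have hA : ∀ᶠ ε in nhdsWithin (0:ℝ) (Set.Ioi 0), ∀ a : V,
        (w a 0 - c 0 ≠ 0 → ε < |w a 0 - c 0|) ∧ (w a 1 - c 1 ≠ 0 → ε < |w a 1 - c 1|) ∧
          (w a 0 - c 0 ≠ w a 1 - c 1 → ε < |(w a 0 - c 0) - (w a 1 - c 1)|) :=
      Filter.eventually_all.mpr (fun a => ((hev1 _).and ((hev1 _).and
        ((hev1 _).mono (fun ε h hne => h (sub_ne_zero.mpr hne))))))
    have hB : ∀ᶠ ε in nhdsWithin (0:ℝ) (Set.Ioi 0), ∀ a : V',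
        (w' a 0 - c 0 ≠ 0 → ε < |w' a 0 - c 0|) ∧ (w' a 1 - c 1 ≠ 0 → ε < |w' a 1 - c 1|) ∧
          (w' a 0 - c 0 ≠ w' a 1 - c 1 → ε < |(w' a 0 - c 0) - (w' a 1 - c 1)|) :=
      Filter.eventually_all.mpr (fun a => ((hev1 _).and ((hev1 _).and
        ((hev1 _).mono (fun ε h hne => h (sub_ne_zero.mpr hne))))))
    have h0 : ∀ᶠ ε in nhdsWithin (0:ℝ) (Set.Ioi 0), 0 < ε := eventually_mem_nhdsWithin
    exact (h0.and (hA.and hB)).exists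
  have h1 := comboEq w φ c ε hε hc
  have h2 := comboEq w' φ' c ε hε hc'
  rw [hg, hg, hg, hg, hg, hg, h2] at h1
  have h3 := mul_left_cancel₀ (neg_ne_zero.mpr hε.ne') h1
  exact_mod_cast h3.symm

theorem stmt9 (Φ : ℤ) (hΦ : 0 < Φ) (f : (Fin 2 → ℤ) → ℝ)
    (V V' : Type) [Fintype V] [Fintype V']
    (w : V → Fin 2 → ℝ) (φ : V → ℤ) (w' : V' → Fin 2 → ℝ) (φ' : V' → ℤ)
    (h : IsAssignmentValuation Φ f V w φ) (h' : IsAssignmentValuation Φ f V' w' φ')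
    (hirr : ∀ i j : V, i ≠ j → w i ≠ w j)
    (hirr' : ∀ i j : V', i ≠ j → w' i ≠ w' j) :
    ∃ σ : V ≃ V', ∀ i : V, w' (σ i) = w i ∧ φ' (σ i) = φ i := by
  classical
  have hg : ∀ p, gfun w φ p = gfun w' φ' p := fun p => (lemA h p).unique (lemA h' p)
  have hfib := fun c => fiber hg c
  have winj : ∀ i i' : V, w i = w i' → i = i' := by
    intro i i' hw; by_contra hne; exact hirr i i' hne hw
  have winj' : ∀ j j' : V', w' j = w' j' → j = j' := by
    intro j j' hw; by_contra hne; exact hirr' j j' hne hw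
  have honeV : ∀ (i : V) (c), w i = c → univ.filter (fun i' => w i' = c) = {i} := by
    intro i c hc; ext i''
    simp only [Finset.mem_filter, Finset.mem_univ, true_and, Finset.mem_singleton]
    exact ⟨fun hw => winj _ _ (hw.trans hc.symm), fun he => he ▸ hc⟩
  have honeV' : ∀ (j : V') (c), w' j = c → univ.filter (fun j' => w' j' = c) = {j} := by
    intro j c hc; ext j''
    simp only [Finset.mem_filter, Finset.mem_univ, true_and, Finset.mem_singleton]
    exact ⟨fun hw => winj' _ _ (hw.trans hc.symm), fun he => he ▸ hc⟩
  have hex : ∀ i : V, ∃ j : V', w' j = w i := by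
    intro i
    by_contra hno
    push_neg at hno
    have h1 := hfib (w i)
    rw [honeV i (w i) rfl, Finset.sum_singleton] at h1
    have h2 : univ.filter (fun j => w' j = w i) = ∅ :=
      Finset.filter_eq_empty_iff.mpr (fun j _ => hno j)
    rw [h2, Finset.sum_empty] at h1
    exact absurd h1 (h.1 i).ne'
  choose σ hσ using hex
  have hex' : ∀ j : V', ∃ i : V, w i = w' j := by
    intro j
    by_contra hno
    push_neg at hno
    have h1 := hfib (w' j)
    rw [honeV' j (w' j) rfl, Finset.sum_singleton] at h1
    have h2 : univ.filter (fun i => w i = w' j) = ∅ :=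
      Finset.filter_eq_empty_iff.mpr (fun i _ => hno i)
    rw [h2, Finset.sum_empty] at h1
    exact absurd h1.symm (h'.1 j).ne'
  choose τ hτ using hex'
  refine ⟨⟨σ, τ, ?_, ?_⟩, ?_⟩
  · intro i; exact winj _ _ ((hτ (σ i)).trans (hσ i))
  · intro j; exact winj' _ _ ((hσ (τ j)).trans (hτ j))
  · intro i
    simp only [Equiv.coe_fn_mk]
    refine ⟨hσ i, ?_⟩
    have h1 := hfib (w i)
    rw [honeV i (w i) rfl, Finset.sum_singleton, honeV' (σ i) (w i) (hσ i),
      Finset.sum_singleton] at h1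
    exact h1.symm
end

section
/- Let (V, w, φ) be an irreducible representation of a bivariate assignment valuation f : T_Φ → ℝ, and let p ∈ ℝ² be such that the maximizer set D_f(p) is two-dimensional. If p ≠ (w(i,1), w(i,2)) for every i ∈ V, then D_f(p) is of zero-type. -/
open Finset

lemma zInf_eq {s : Set ℤ} {m : ℤ} (hm : m ∈ s) (hlb : ∀ x ∈ s, m ≤ x) : sInf s = m :=
  le_antisymm (csInf_le ⟨m, fun x hx => hlb x hx⟩ hm) (le_csInf ⟨m, hm⟩ hlb)

lemma zSup_eq {s : Set ℤ} {m : ℤ} (hm : m ∈ s) (hub : ∀ x ∈ s, x ≤ m) : sSup s = m :=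
  le_antisymm (csSup_le ⟨m, hm⟩ hub) (le_csSup ⟨m, fun x hx => hub x hx⟩ hm)

lemma exists_split {V : Type} (F : Finset V) (φ : V → ℤ) (hφ : ∀ i, 0 ≤ φ i)
    (d : ℤ) (h0 : 0 ≤ d) (hd : d ≤ ∑ i ∈ F, φ i) :
    ∃ g : V → ℤ, (∀ i, 0 ≤ g i ∧ g i ≤ φ i) ∧ (∀ i ∉ F, g i = 0) ∧ ∑ i ∈ F, g i = d := by
  classical
  induction F using Finset.induction_on generalizing d with
  | empty =>
    refine ⟨fun _ => 0, fun i => ⟨le_rfl, hφ i⟩, fun _ _ => rfl, ?_⟩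
    simp only [Finset.sum_empty] at hd ⊢
    omega
  | @insert a s ha ih =>
    rw [Finset.sum_insert ha] at hd
    set d1 := min d (φ a) with hd1
    have h0' : 0 ≤ d - d1 := by omega
    have hd' : d - d1 ≤ ∑ i ∈ s, φ i := by
      have := Finset.sum_nonneg (fun i (_ : i ∈ s) => hφ i)
      omega
    obtain ⟨g, hg, hgz, hgs⟩ := ih (d - d1) h0' hd'
    refine ⟨Function.update g a d1, fun i => ?_, fun i hi => ?_, ?_⟩
    · by_cases h : i = a
      · subst h; rw [Function.update_self]; exact ⟨le_min h0 (hφ i), min_le_right _ _⟩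
      · simp [Function.update_of_ne h]; exact hg i
    · have h1 : i ≠ a := by rintro rfl; exact hi (Finset.mem_insert_self _ _)
      have h2 : i ∉ s := fun h => hi (Finset.mem_insert_of_mem h)
      simp [Function.update_of_ne h1]; exact hgz i h2
    · rw [Finset.sum_insert ha, Function.update_self]
      have : ∑ i ∈ s, Function.update g a d1 i = ∑ i ∈ s, g i :=
        Finset.sum_congr rfl fun i hi => Function.update_of_ne (by rintro rfl; exact ha hi) _ _
      rw [this, hgs]; ring

lemma classify' (a b : ℝ) :
    (b < a ∧ 0 < a) ∨ (a < b ∧ 0 < b) ∨ (a = b ∧ 0 < a) ∨ (a = 0 ∧ b < 0) ∨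
      (b = 0 ∧ a < 0) ∨ (a < 0 ∧ b < 0) ∨ (a = 0 ∧ b = 0) := by
  rcases lt_trichotomy a b with h | h | h <;>
    rcases lt_trichotomy a 0 with h2 | h2 | h2 <;>
    rcases lt_trichotomy b 0 with h3 | h3 | h3 <;>
    first
      | exact Or.inl ⟨by linarith, by linarith⟩
      | exact Or.inr (Or.inl ⟨by linarith, by linarith⟩)
      | exact Or.inr (Or.inr (Or.inl ⟨by linarith, by linarith⟩))
      | exact Or.inr (Or.inr (Or.inr (Or.inl ⟨by linarith, by linarith⟩)))
      | exact Or.inr (Or.inr (Or.inr (Or.inr (Or.inl ⟨by linarith, by linarith⟩))))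
      | exact Or.inr (Or.inr (Or.inr (Or.inr (Or.inr (Or.inl ⟨by linarith, by linarith⟩)))))
      | exact Or.inr (Or.inr (Or.inr (Or.inr (Or.inr (Or.inr ⟨by linarith, by linarith⟩)))))

open Classical in
lemma pointwise_excl (a b : ℝ) (φ : ℤ) (hφ : 0 ≤ φ) :
    (if b < a ∧ 0 < a then φ else 0) + (if a < b ∧ 0 < b then φ else 0) +
      (if a = b ∧ 0 < a then φ else 0) + (if a = 0 ∧ b < 0 then φ else 0) +
      (if b = 0 ∧ a < 0 then φ else 0) ≤ φ := by
  rcases classify' a b with ⟨h1,h2⟩|⟨h1,h2⟩|⟨h1,h2⟩|⟨h1,h2⟩|⟨h1,h2⟩|⟨h1,h2⟩|⟨h1,h2⟩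
  · rw [if_pos ⟨h1,h2⟩, if_neg (by rintro ⟨u,v⟩; linarith), if_neg (by rintro ⟨u,v⟩; linarith),
      if_neg (by rintro ⟨u,v⟩; linarith), if_neg (by rintro ⟨u,v⟩; linarith)]; omega
  · rw [if_neg (by rintro ⟨u,v⟩; linarith), if_pos ⟨h1,h2⟩, if_neg (by rintro ⟨u,v⟩; linarith),
      if_neg (by rintro ⟨u,v⟩; linarith), if_neg (by rintro ⟨u,v⟩; linarith)]; omega
  · rw [if_neg (by rintro ⟨u,v⟩; linarith), if_neg (by rintro ⟨u,v⟩; linarith), if_pos ⟨h1,h2⟩,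
      if_neg (by rintro ⟨u,v⟩; linarith), if_neg (by rintro ⟨u,v⟩; linarith)]; omega
  · rw [if_neg (by rintro ⟨u,v⟩; linarith), if_neg (by rintro ⟨u,v⟩; linarith),
      if_neg (by rintro ⟨u,v⟩; linarith), if_pos ⟨h1,h2⟩, if_neg (by rintro ⟨u,v⟩; linarith)]; omega
  · rw [if_neg (by rintro ⟨u,v⟩; linarith), if_neg (by rintro ⟨u,v⟩; linarith),
      if_neg (by rintro ⟨u,v⟩; linarith), if_neg (by rintro ⟨u,v⟩; linarith), if_pos ⟨h1,h2⟩]; omega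
  · rw [if_neg (by rintro ⟨u,v⟩; linarith), if_neg (by rintro ⟨u,v⟩; linarith),
      if_neg (by rintro ⟨u,v⟩; linarith), if_neg (by rintro ⟨u,v⟩; linarith),
      if_neg (by rintro ⟨u,v⟩; linarith)]; omega
  · rw [if_neg (by rintro ⟨u,v⟩; linarith), if_neg (by rintro ⟨u,v⟩; linarith),
      if_neg (by rintro ⟨u,v⟩; linarith), if_neg (by rintro ⟨u,v⟩; linarith),
      if_neg (by rintro ⟨u,v⟩; linarith)]; omega

open Classical in
lemma pointwise_val (a b : ℝ) (φ g1 g2 g3 : ℤ)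
    (hφ : 0 ≤ φ) (hne : ¬(a = 0 ∧ b = 0))
    (hg1 : 0 ≤ g1) (hg1' : g1 ≤ φ) (hg2 : 0 ≤ g2) (hg2' : g2 ≤ φ) (hg3 : 0 ≤ g3) (hg3' : g3 ≤ φ)
    (hz1 : ¬(a = b ∧ 0 < a) → g1 = 0) (hz2 : ¬(a = 0 ∧ b < 0) → g2 = 0)
    (hz3 : ¬(b = 0 ∧ a < 0) → g3 = 0) :
    (0 ≤ (if b < a ∧ 0 < a then φ else 0) + g1 + g2) ∧
    (0 ≤ (if a < b ∧ 0 < b then φ else 0) + (if a = b ∧ 0 < a then φ - g1 else 0) + g3) ∧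
    ((if b < a ∧ 0 < a then φ else 0) + g1 + g2) +
      ((if a < b ∧ 0 < b then φ else 0) + (if a = b ∧ 0 < a then φ - g1 else 0) + g3) ≤ φ ∧
    a * (((if b < a ∧ 0 < a then φ else 0) + g1 + g2 : ℤ) : ℝ) +
      b * (((if a < b ∧ 0 < b then φ else 0) + (if a = b ∧ 0 < a then φ - g1 else 0) + g3 : ℤ) : ℝ)
      = max (max a b) 0 * (φ : ℝ) := by
  rcases classify' a b with ⟨h1,h2⟩|⟨h1,h2⟩|⟨h1,h2⟩|⟨h1,h2⟩|⟨h1,h2⟩|⟨h1,h2⟩|⟨h1,h2⟩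
  · -- A : b < a, 0 < a
    have e1 : g1 = 0 := hz1 (by rintro ⟨u,v⟩; linarith)
    have e2 : g2 = 0 := hz2 (by rintro ⟨u,v⟩; linarith)
    have e3 : g3 = 0 := hz3 (by rintro ⟨u,v⟩; linarith)
    have hm : max (max a b) 0 = a := by rw [max_eq_left h1.le, max_eq_left h2.le]
    rw [if_pos ⟨h1,h2⟩, if_neg (by rintro ⟨u,v⟩; linarith), if_neg (by rintro ⟨u,v⟩; linarith),
      e1, e2, e3, hm]
    refine ⟨by omega, by omega, by omega, by push_cast; ring⟩
  · -- B : a < b, 0 < b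
    have e1 : g1 = 0 := hz1 (by rintro ⟨u,v⟩; linarith)
    have e2 : g2 = 0 := hz2 (by rintro ⟨u,v⟩; linarith)
    have e3 : g3 = 0 := hz3 (by rintro ⟨u,v⟩; linarith)
    have hm : max (max a b) 0 = b := by rw [max_eq_right h1.le, max_eq_left h2.le]
    rw [if_neg (by rintro ⟨u,v⟩; linarith), if_pos ⟨h1,h2⟩, if_neg (by rintro ⟨u,v⟩; linarith),
      e1, e2, e3, hm]
    refine ⟨by omega, by omega, by omega, by push_cast; ring⟩
  · -- T1 : a = b, 0 < a
    have e2 : g2 = 0 := hz2 (by rintro ⟨u,v⟩; linarith)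
    have e3 : g3 = 0 := hz3 (by rintro ⟨u,v⟩; linarith)
    have hm : max (max a b) 0 = a := by rw [← h1, max_self, max_eq_left h2.le]
    rw [if_neg (by rintro ⟨u,v⟩; linarith), if_neg (by rintro ⟨u,v⟩; linarith), if_pos ⟨h1,h2⟩,
      e2, e3, hm, ← h1]
    refine ⟨by omega, by omega, by omega, by push_cast; ring⟩
  · -- T2 : a = 0, b < 0
    have e1 : g1 = 0 := hz1 (by rintro ⟨u,v⟩; linarith)
    have e3 : g3 = 0 := hz3 (by rintro ⟨u,v⟩; linarith)
    have hm : max (max a b) 0 = 0 := by rw [h1, max_eq_left h2.le, max_self]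
    rw [if_neg (by rintro ⟨u,v⟩; linarith), if_neg (by rintro ⟨u,v⟩; linarith),
      if_neg (by rintro ⟨u,v⟩; linarith), e1, e3, hm, h1]
    refine ⟨by omega, by omega, by omega, by push_cast; ring⟩
  · -- T3 : b = 0, a < 0
    have e1 : g1 = 0 := hz1 (by rintro ⟨u,v⟩; linarith)
    have e2 : g2 = 0 := hz2 (by rintro ⟨u,v⟩; linarith)
    have hm : max (max a b) 0 = 0 := by rw [h1, max_eq_right h2.le, max_self]
    rw [if_neg (by rintro ⟨u,v⟩; linarith), if_neg (by rintro ⟨u,v⟩; linarith),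
      if_neg (by rintro ⟨u,v⟩; linarith), e1, e2, hm, h1]
    refine ⟨by omega, by omega, by omega, by push_cast; ring⟩
  · -- Z : a < 0, b < 0
    have e1 : g1 = 0 := hz1 (by rintro ⟨u,v⟩; linarith)
    have e2 : g2 = 0 := hz2 (by rintro ⟨u,v⟩; linarith)
    have e3 : g3 = 0 := hz3 (by rintro ⟨u,v⟩; linarith)
    have hm : max (max a b) 0 = 0 := max_eq_right (le_of_lt (max_lt h1 h2))
    rw [if_neg (by rintro ⟨u,v⟩; linarith), if_neg (by rintro ⟨u,v⟩; linarith),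
      if_neg (by rintro ⟨u,v⟩; linarith), e1, e2, e3, hm]
    refine ⟨by omega, by omega, by omega, by push_cast; ring⟩
  · exact absurd ⟨h1, h2⟩ hne

open Classical in
lemma pointwise_bounds (a b : ℝ) (φ y0 y1 : ℤ)
    (hne : ¬(a = 0 ∧ b = 0)) (hy0 : 0 ≤ y0) (hy1 : 0 ≤ y1) (hs : y0 + y1 ≤ φ)
    (heq : a * (y0:ℝ) + b * (y1:ℝ) = max (max a b) 0 * (φ:ℝ)) :
    (if b < a ∧ 0 < a then φ else 0) ≤ y0 ∧
    y0 ≤ (if b < a ∧ 0 < a then φ else 0) + (if a = b ∧ 0 < a then φ else 0) +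
      (if a = 0 ∧ b < 0 then φ else 0) ∧
    (if a < b ∧ 0 < b then φ else 0) ≤ y1 ∧
    y1 ≤ (if a < b ∧ 0 < b then φ else 0) + (if a = b ∧ 0 < a then φ else 0) +
      (if b = 0 ∧ a < 0 then φ else 0) ∧
    (if b < a ∧ 0 < a then φ else 0) + (if a < b ∧ 0 < b then φ else 0) +
      (if a = b ∧ 0 < a then φ else 0) ≤ y0 + y1 ∧
    y0 + y1 ≤ (if b < a ∧ 0 < a then φ else 0) + (if a < b ∧ 0 < b then φ else 0) +
      (if a = b ∧ 0 < a then φ else 0) + (if a = 0 ∧ b < 0 then φ else 0) +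
      (if b = 0 ∧ a < 0 then φ else 0) := by
  have hsR : (y0:ℝ) + y1 ≤ φ := by exact_mod_cast hs
  have h0R : (0:ℝ) ≤ (y0:ℝ) := by exact_mod_cast hy0
  have h1R : (0:ℝ) ≤ (y1:ℝ) := by exact_mod_cast hy1
  rcases classify' a b with ⟨h1,h2⟩|⟨h1,h2⟩|⟨h1,h2⟩|⟨h1,h2⟩|⟨h1,h2⟩|⟨h1,h2⟩|⟨h1,h2⟩
  · -- A : b < a, 0 < a
    rw [max_eq_left h1.le, max_eq_left h2.le] at heq
    have e1 : y1 = 0 := by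
      have : (y1:ℝ) ≤ 0 := by nlinarith [mul_le_mul_of_nonneg_left hsR h2.le]
      exact le_antisymm (by exact_mod_cast this) hy1
    have e0 : y0 = φ := by
      have h3 : a * (y0:ℝ) = a * φ := by rw [e1] at heq; push_cast at heq; linarith
      exact_mod_cast mul_left_cancel₀ h2.ne' h3
    rw [if_pos ⟨h1,h2⟩, if_neg (by rintro ⟨u,v⟩; linarith), if_neg (by rintro ⟨u,v⟩; linarith),
      if_neg (by rintro ⟨u,v⟩; linarith), if_neg (by rintro ⟨u,v⟩; linarith)]
    omega
  · -- B : a < b, 0 < b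
    rw [max_eq_right h1.le, max_eq_left h2.le] at heq
    have e0 : y0 = 0 := by
      have : (y0:ℝ) ≤ 0 := by nlinarith [mul_le_mul_of_nonneg_left hsR h2.le]
      exact le_antisymm (by exact_mod_cast this) hy0
    have e1 : y1 = φ := by
      have h3 : b * (y1:ℝ) = b * φ := by rw [e0] at heq; push_cast at heq; linarith
      exact_mod_cast mul_left_cancel₀ h2.ne' h3
    rw [if_neg (by rintro ⟨u,v⟩; linarith),
      if_neg (by rintro ⟨u,v⟩; linarith),
      if_neg (by rintro ⟨u,v⟩; linarith),
      if_pos ⟨h1,h2⟩,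
      if_neg (by rintro ⟨u,v⟩; linarith)]
    omega
  · -- T1 : a = b, 0 < a
    rw [← h1, max_self, max_eq_left h2.le] at heq
    have e : y0 + y1 = φ := by
      have h3 := mul_left_cancel₀ h2.ne' (show a * ((y0:ℝ) + y1) = a * φ by rw [mul_add]; linarith)
      exact_mod_cast h3
    rw [if_neg (by rintro ⟨u,v⟩; linarith),
      if_pos ⟨h1,h2⟩,
      if_neg (by rintro ⟨u,v⟩; linarith),
      if_neg (by rintro ⟨u,v⟩; linarith),
      if_neg (by rintro ⟨u,v⟩; linarith)]
    omega
  · -- T2 : a = 0, b < 0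
    rw [h1, max_eq_left h2.le, max_self] at heq
    have hb : b * (y1:ℝ) = 0 := by linarith [heq]
    have e1 : y1 = 0 := by
      have := (mul_eq_zero.mp hb).resolve_left h2.ne
      exact_mod_cast this
    rw [if_neg (by rintro ⟨u,v⟩; linarith),
      if_neg (by rintro ⟨u,v⟩; linarith),
      if_pos ⟨h1,h2⟩,
      if_neg (by rintro ⟨u,v⟩; linarith),
      if_neg (by rintro ⟨u,v⟩; linarith)]
    omega
  · -- T3 : b = 0, a < 0
    rw [h1, max_eq_right h2.le, max_self] at heq
    have hb : a * (y0:ℝ) = 0 := by linarith [heq]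
    have e0 : y0 = 0 := by
      have := (mul_eq_zero.mp hb).resolve_left h2.ne
      exact_mod_cast this
    rw [if_neg (by rintro ⟨u,v⟩; linarith),
      if_neg (by rintro ⟨u,v⟩; linarith),
      if_neg (by rintro ⟨u,v⟩; linarith),
      if_neg (by rintro ⟨u,v⟩; linarith),
      if_pos ⟨h1,h2⟩]
    omega
  · -- Z : a < 0, b < 0
    rw [max_eq_right (le_of_lt (max_lt h1 h2))] at heq
    have e0 : y0 = 0 := by
      have : (y0:ℝ) ≤ 0 := by nlinarith [mul_nonpos_of_nonpos_of_nonneg h2.le h1R]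
      exact le_antisymm (by exact_mod_cast this) hy0
    have e1 : y1 = 0 := by
      have : (y1:ℝ) ≤ 0 := by nlinarith [mul_nonpos_of_nonpos_of_nonneg h1.le h0R]
      exact le_antisymm (by exact_mod_cast this) hy1
    rw [if_neg (by rintro ⟨u,v⟩; linarith), if_neg (by rintro ⟨u,v⟩; linarith),
      if_neg (by rintro ⟨u,v⟩; linarith), if_neg (by rintro ⟨u,v⟩; linarith),
      if_neg (by rintro ⟨u,v⟩; linarith)]
    omega
  · exact absurd ⟨h1, h2⟩ hne

lemma term_le (a b : ℝ) (φ y0 y1 : ℤ) (h0 : 0 ≤ y0) (h1 : 0 ≤ y1) (hs : y0 + y1 ≤ φ) :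
    a * (y0:ℝ) + b * (y1:ℝ) ≤ max (max a b) 0 * (φ:ℝ) := by
  set c := max (max a b) 0 with hc
  have hca : a ≤ c := le_trans (le_max_left a b) (le_max_left _ _)
  have hcb : b ≤ c := le_trans (le_max_right a b) (le_max_left _ _)
  have hc0 : 0 ≤ c := le_max_right _ _
  have h0R : (0:ℝ) ≤ (y0:ℝ) := by exact_mod_cast h0
  have h1R : (0:ℝ) ≤ (y1:ℝ) := by exact_mod_cast h1
  have hsR : (y0:ℝ) + (y1:ℝ) ≤ (φ:ℝ) := by exact_mod_cast hs
  have e1 : 0 ≤ (c - a) * (y0:ℝ) := mul_nonneg (by linarith) h0R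
  have e2 : 0 ≤ (c - b) * (y1:ℝ) := mul_nonneg (by linarith) h1R
  have e3 : 0 ≤ c * ((φ:ℝ) - y0 - y1) := mul_nonneg hc0 (by linarith)
  nlinarith [e1, e2, e3]

theorem stmt10 (Φ : ℤ) (hΦ : 0 < Φ) (f : (Fin 2 → ℤ) → ℝ) (V : Type) [Fintype V]
    (w : V → Fin 2 → ℝ) (φ : V → ℤ) (h : IsAssignmentValuation Φ f V w φ)
    (hirr : ∀ i j : V, i ≠ j → w i ≠ w j)
    (p : Fin 2 → ℝ) (h2 : TwoDimensional (maximizerSet Φ f p))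
    (hp : ∀ i : V, p ≠ w i) :
    typeQ (maximizerSet Φ f p) = 0 := by
  classical
  obtain ⟨hφpos, hΦeq, hgreat⟩ := h
  set a : V → ℝ := fun i => w i 0 - p 0 with ha_def
  set b : V → ℝ := fun i => w i 1 - p 1 with hb_def
  have hne : ∀ i, ¬(a i = 0 ∧ b i = 0) := by
    rintro i ⟨u, v⟩
    apply hp i
    have u' : w i 0 - p 0 = 0 := u
    have v' : w i 1 - p 1 = 0 := v
    funext j
    fin_cases j
    · show p 0 = w i 0; linarith
    · show p 1 = w i 1; linarith
  set A₀ : ℤ := ∑ i, if b i < a i ∧ 0 < a i then φ i else 0 with hA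
  set B₀ : ℤ := ∑ i, if a i < b i ∧ 0 < b i then φ i else 0 with hB
  set S : ℤ := ∑ i, if a i = b i ∧ 0 < a i then φ i else 0 with hS
  set U : ℤ := ∑ i, if a i = 0 ∧ b i < 0 then φ i else 0 with hU
  set W : ℤ := ∑ i, if b i = 0 ∧ a i < 0 then φ i else 0 with hW
  set M : ℝ := ∑ i, max (max (a i) (b i)) 0 * (φ i : ℝ) with hM
  have hite_nonneg : ∀ (c : Prop) [Decidable c] (n : ℤ), 0 ≤ n → (0:ℤ) ≤ if c then n else 0 := by
    intro c _ n hn; split_ifs; exacts [hn, le_rfl]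
  have hA0 : 0 ≤ A₀ := Finset.sum_nonneg fun i _ => hite_nonneg _ _ (hφpos i).le
  have hB0 : 0 ≤ B₀ := Finset.sum_nonneg fun i _ => hite_nonneg _ _ (hφpos i).le
  have hS0 : 0 ≤ S := Finset.sum_nonneg fun i _ => hite_nonneg _ _ (hφpos i).le
  have hU0 : 0 ≤ U := Finset.sum_nonneg fun i _ => hite_nonneg _ _ (hφpos i).le
  have hW0 : 0 ≤ W := Finset.sum_nonneg fun i _ => hite_nonneg _ _ (hφpos i).le
  have hΦsum : A₀ + B₀ + S + U + W ≤ Φ := by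
    rw [hA, hB, hS, hU, hW, ← hΦeq, ← Finset.sum_add_distrib, ← Finset.sum_add_distrib,
      ← Finset.sum_add_distrib, ← Finset.sum_add_distrib]
    exact Finset.sum_le_sum fun i _ => pointwise_excl (a i) (b i) (φ i) (hφpos i).le
  -- value rewriting
  have hval : ∀ (x : Fin 2 → ℤ) (y : V → Fin 2 → ℤ), FeasibleAssign φ x y →
      (∑ i, (w i 0 * (y i 0 : ℝ) + w i 1 * (y i 1 : ℝ))) - inner2 p x
        = ∑ i, (a i * (y i 0 : ℝ) + b i * (y i 1 : ℝ)) := by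
    intro x y hy
    have h0 : (x 0 : ℝ) = ∑ i, ((y i 0 : ℝ)) := by rw [← hy.2.1 0]; push_cast; ring
    have h1 : (x 1 : ℝ) = ∑ i, ((y i 1 : ℝ)) := by rw [← hy.2.1 1]; push_cast; ring
    rw [inner2, h0, h1, Finset.mul_sum, Finset.mul_sum, ← Finset.sum_add_distrib,
      ← Finset.sum_sub_distrib]
    refine Finset.sum_congr rfl fun i _ => ?_
    show _ = (w i 0 - p 0) * _ + (w i 1 - p 1) * _
    ring
  have h_ub : ∀ x ∈ TPhi Φ, f x - inner2 p x ≤ M := by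
    intro x hx
    obtain ⟨y, hy, hfx⟩ := (hgreat x hx).1
    rw [hfx, hval x y hy, hM]
    exact Finset.sum_le_sum fun i _ =>
      term_le (a i) (b i) (φ i) (y i 0) (y i 1) (hy.1 i 0) (hy.1 i 1) (hy.2.2 i)
  -- sums over filters
  have hfilter_sum : ∀ (F : Finset V) (g : V → ℤ), (∀ i ∉ F, g i = 0) →
      ∑ i ∈ F, g i = ∑ i, g i :=
    fun F g hg => Finset.sum_subset (Finset.subset_univ _) fun i hi hni => hg i hni
  have hexval : ∀ x : Fin 2 → ℤ, A₀ ≤ x 0 → x 0 ≤ A₀ + S + U → B₀ ≤ x 1 → x 1 ≤ B₀ + S + W →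
      A₀ + B₀ + S ≤ x 0 + x 1 → x 0 + x 1 ≤ A₀ + B₀ + S + U + W →
      x ∈ TPhi Φ ∧ f x - inner2 p x = M := by
    intro x hx1 hx2 hx3 hx4 hx5 hx6
    have hT : x ∈ TPhi Φ := ⟨by omega, by omega, by omega⟩
    set d0 := x 0 - A₀ with hd0
    set d1 := x 1 - B₀ with hd1
    set s1 := max 0 (max (d0 - U) (S - d1)) with hs1
    have f1 : 0 ≤ s1 := le_max_left _ _
    have f2 : d0 - U ≤ s1 := le_trans (le_max_left _ _) (le_max_right _ _)
    have f3 : S - d1 ≤ s1 := le_trans (le_max_right _ _) (le_max_right _ _)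
    have f4 : s1 ≤ S := max_le (by omega) (max_le (by omega) (by omega))
    have f5 : s1 ≤ d0 := max_le (by omega) (max_le (by omega) (by omega))
    have f6 : s1 ≤ S + W - d1 := max_le (by omega) (max_le (by omega) (by omega))
    obtain ⟨g1, hg1, hg1z, hg1s⟩ := exists_split (Finset.univ.filter fun i => a i = b i ∧ 0 < a i)
      φ (fun i => (hφpos i).le) s1 f1 (by rw [Finset.sum_filter, ← hS]; exact f4)
    obtain ⟨g2, hg2, hg2z, hg2s⟩ := exists_split (Finset.univ.filter fun i => a i = 0 ∧ b i < 0)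
      φ (fun i => (hφpos i).le) (d0 - s1) (by omega) (by rw [Finset.sum_filter, ← hU]; omega)
    obtain ⟨g3, hg3, hg3z, hg3s⟩ := exists_split (Finset.univ.filter fun i => b i = 0 ∧ a i < 0)
      φ (fun i => (hφpos i).le) (d1 - (S - s1)) (by omega) (by rw [Finset.sum_filter, ← hW]; omega)
    have hg1z' : ∀ i, ¬(a i = b i ∧ 0 < a i) → g1 i = 0 := fun i hi => hg1z i (by simp [hi])
    have hg2z' : ∀ i, ¬(a i = 0 ∧ b i < 0) → g2 i = 0 := fun i hi => hg2z i (by simp [hi])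
    have hg3z' : ∀ i, ¬(b i = 0 ∧ a i < 0) → g3 i = 0 := fun i hi => hg3z i (by simp [hi])
    have hg1sum : ∑ i, g1 i = s1 := by
      rw [← hfilter_sum _ g1 (fun i hi => hg1z i hi)]; exact hg1s
    have hg2sum : ∑ i, g2 i = d0 - s1 := by
      rw [← hfilter_sum _ g2 (fun i hi => hg2z i hi)]; exact hg2s
    have hg3sum : ∑ i, g3 i = d1 - (S - s1) := by
      rw [← hfilter_sum _ g3 (fun i hi => hg3z i hi)]; exact hg3s
    set y : V → Fin 2 → ℤ := fun i j => if j = 0 then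
        (if b i < a i ∧ 0 < a i then φ i else 0) + g1 i + g2 i
      else
        (if a i < b i ∧ 0 < b i then φ i else 0) +
          (if a i = b i ∧ 0 < a i then φ i - g1 i else 0) + g3 i with hy_def
    have hy0 : ∀ i, y i 0 = (if b i < a i ∧ 0 < a i then φ i else 0) + g1 i + g2 i :=
      fun i => if_pos rfl
    have hy1 : ∀ i, y i 1 = (if a i < b i ∧ 0 < b i then φ i else 0) +
        (if a i = b i ∧ 0 < a i then φ i - g1 i else 0) + g3 i :=
      fun i => if_neg (by decide)
    have hyP : ∀ i, 0 ≤ y i 0 ∧ 0 ≤ y i 1 ∧ y i 0 + y i 1 ≤ φ i ∧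
        a i * (y i 0 : ℝ) + b i * (y i 1 : ℝ) = max (max (a i) (b i)) 0 * (φ i : ℝ) := by
      intro i
      rw [hy0 i, hy1 i]
      exact pointwise_val (a i) (b i) (φ i) (g1 i) (g2 i) (g3 i) (hφpos i).le (hne i)
        (hg1 i).1 (hg1 i).2 (hg2 i).1 (hg2 i).2 (hg3 i).1 (hg3 i).2
        (hg1z' i) (hg2z' i) (hg3z' i)
    have hsum0 : ∑ i, y i 0 = x 0 := by
      calc ∑ i, y i 0
          = ∑ i, ((if b i < a i ∧ 0 < a i then φ i else 0) + g1 i + g2 i) :=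
            Finset.sum_congr rfl fun i _ => hy0 i
        _ = A₀ + (∑ i, g1 i) + (∑ i, g2 i) := by
            rw [Finset.sum_add_distrib, Finset.sum_add_distrib, ← hA]
        _ = x 0 := by rw [hg1sum, hg2sum]; omega
    have hsum1 : ∑ i, y i 1 = x 1 := by
      have hmid : ∀ i, (if a i = b i ∧ 0 < a i then φ i - g1 i else 0) =
          (if a i = b i ∧ 0 < a i then φ i else 0) - g1 i := by
        intro i; split_ifs with hc; · ring
        · rw [hg1z' i hc]; ring
      calc ∑ i, y i 1
          = ∑ i, ((if a i < b i ∧ 0 < b i then φ i else 0) +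
              ((if a i = b i ∧ 0 < a i then φ i else 0) - g1 i) + g3 i) :=
            Finset.sum_congr rfl fun i _ => by rw [hy1 i, hmid i]
        _ = B₀ + ((∑ i, if a i = b i ∧ 0 < a i then φ i else 0) - ∑ i, g1 i) + ∑ i, g3 i := by
            rw [Finset.sum_add_distrib, Finset.sum_add_distrib, Finset.sum_sub_distrib, ← hB]
        _ = x 1 := by rw [← hS, hg1sum, hg3sum]; omega
    have hfeas : FeasibleAssign φ x y := by
      refine ⟨fun i j => ?_, fun j => ?_, fun i => (hyP i).2.2.1⟩
      · fin_cases j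
        · exact (hyP i).1
        · exact (hyP i).2.1
      · fin_cases j
        · exact hsum0
        · exact hsum1
    have hvy : f x - inner2 p x = M := by
      have hle := h_ub x hT
      have hge : M ≤ f x - inner2 p x := by
        have hmem : (∑ i, (w i 0 * (y i 0 : ℝ) + w i 1 * (y i 1 : ℝ))) ≤ f x :=
          (hgreat x hT).2 ⟨y, hfeas, rfl⟩
        have heq2 : (∑ i, (w i 0 * (y i 0 : ℝ) + w i 1 * (y i 1 : ℝ))) - inner2 p x = M := by
          rw [hval x y hfeas, hM]
          exact Finset.sum_congr rfl fun i _ => (hyP i).2.2.2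
        linarith
      linarith
    exact ⟨hT, hvy⟩
  -- membership from hexagon bounds
  have hmemHex : ∀ x : Fin 2 → ℤ, A₀ ≤ x 0 → x 0 ≤ A₀ + S + U → B₀ ≤ x 1 → x 1 ≤ B₀ + S + W →
      A₀ + B₀ + S ≤ x 0 + x 1 → x 0 + x 1 ≤ A₀ + B₀ + S + U + W →
      x ∈ maximizerSet Φ f p := by
    intro x hx1 hx2 hx3 hx4 hx5 hx6
    obtain ⟨hT, hv⟩ := hexval x hx1 hx2 hx3 hx4 hx5 hx6
    exact ⟨hT, fun z hz => (h_ub z hz).trans hv.ge⟩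
  -- the four witnesses
  set x₀ : Fin 2 → ℤ := fun j => if j = 0 then A₀ else B₀ + S with hx₀def
  set xb : Fin 2 → ℤ := fun j => if j = 0 then A₀ + S + U else B₀ with hxbdef
  set xc : Fin 2 → ℤ := fun j => if j = 0 then A₀ else B₀ + S + W with hxcdef
  set xd : Fin 2 → ℤ := fun j => if j = 0 then A₀ + S + U else B₀ + W with hxddef
  have e00 : x₀ 0 = A₀ := if_pos rfl
  have e01 : x₀ 1 = B₀ + S := if_neg (by decide)
  have eb0 : xb 0 = A₀ + S + U := if_pos rfl
  have eb1 : xb 1 = B₀ := if_neg (by decide)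
  have ec0 : xc 0 = A₀ := if_pos rfl
  have ec1 : xc 1 = B₀ + S + W := if_neg (by decide)
  have ed0 : xd 0 = A₀ + S + U := if_pos rfl
  have ed1 : xd 1 = B₀ + W := if_neg (by decide)
  have hm0 : x₀ ∈ maximizerSet Φ f p := by
    apply hmemHex <;> simp only [e00, e01] <;> omega
  have hmb : xb ∈ maximizerSet Φ f p := by
    apply hmemHex <;> simp only [eb0, eb1] <;> omega
  have hmc : xc ∈ maximizerSet Φ f p := by
    apply hmemHex <;> simp only [ec0, ec1] <;> omega
  have hmd : xd ∈ maximizerSet Φ f p := by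
    apply hmemHex <;> simp only [ed0, ed1] <;> omega
  -- maximizers have value M
  have hmaxval : ∀ x ∈ maximizerSet Φ f p, f x - inner2 p x = M := by
    intro x hx
    refine le_antisymm (h_ub x hx.1) ?_
    have q1 : A₀ ≤ x₀ 0 := by rw [e00]
    have q2 : x₀ 0 ≤ A₀ + S + U := by rw [e00]; omega
    have q3 : B₀ ≤ x₀ 1 := by rw [e01]; omega
    have q4 : x₀ 1 ≤ B₀ + S + W := by rw [e01]; omega
    have q5 : A₀ + B₀ + S ≤ x₀ 0 + x₀ 1 := by rw [e00, e01]; omega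
    have q6 : x₀ 0 + x₀ 1 ≤ A₀ + B₀ + S + U + W := by rw [e00, e01]; omega
    have h0 := hexval x₀ q1 q2 q3 q4 q5 q6
    calc M = f x₀ - inner2 p x₀ := h0.2.symm
      _ ≤ f x - inner2 p x := hx.2 x₀ h0.1
  -- maximizers satisfy hexagon bounds
  have hbounds : ∀ x ∈ maximizerSet Φ f p, A₀ ≤ x 0 ∧ x 0 ≤ A₀ + S + U ∧ B₀ ≤ x 1 ∧
      x 1 ≤ B₀ + S + W ∧ A₀ + B₀ + S ≤ x 0 + x 1 ∧ x 0 + x 1 ≤ A₀ + B₀ + S + U + W := by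
    intro x hx
    obtain ⟨y, hy, hfx⟩ := (hgreat x hx.1).1
    have hv : ∑ i, (a i * (y i 0 : ℝ) + b i * (y i 1 : ℝ))
        = ∑ i, max (max (a i) (b i)) 0 * (φ i : ℝ) := by
      rw [← hval x y hy, ← hfx, hmaxval x hx, hM]
    have hperm := (Finset.sum_eq_sum_iff_of_le fun i _ =>
      term_le (a i) (b i) (φ i) (y i 0) (y i 1) (hy.1 i 0) (hy.1 i 1) (hy.2.2 i)).mp hv
    have pb : ∀ i, _ := fun i => pointwise_bounds (a i) (b i) (φ i) (y i 0) (y i 1)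
      (hne i) (hy.1 i 0) (hy.1 i 1) (hy.2.2 i) (hperm i (Finset.mem_univ i))
    have hx0 := hy.2.1 0
    have hx1' := hy.2.1 1
    refine ⟨?_, ?_, ?_, ?_, ?_, ?_⟩
    · rw [← hx0, hA]; exact Finset.sum_le_sum fun i _ => (pb i).1
    · rw [← hx0]
      calc ∑ i, y i 0 ≤ ∑ i, ((if b i < a i ∧ 0 < a i then φ i else 0) +
            (if a i = b i ∧ 0 < a i then φ i else 0) + (if a i = 0 ∧ b i < 0 then φ i else 0)) :=
          Finset.sum_le_sum fun i _ => (pb i).2.1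
        _ = A₀ + S + U := by rw [Finset.sum_add_distrib, Finset.sum_add_distrib, ← hA, ← hS, ← hU]
    · rw [← hx1', hB]; exact Finset.sum_le_sum fun i _ => (pb i).2.2.1
    · rw [← hx1']
      calc ∑ i, y i 1 ≤ ∑ i, ((if a i < b i ∧ 0 < b i then φ i else 0) +
            (if a i = b i ∧ 0 < a i then φ i else 0) + (if b i = 0 ∧ a i < 0 then φ i else 0)) :=
          Finset.sum_le_sum fun i _ => (pb i).2.2.2.1
        _ = B₀ + S + W := by rw [Finset.sum_add_distrib, Finset.sum_add_distrib, ← hB, ← hS, ← hW]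
    · rw [← hx0, ← hx1']
      calc A₀ + B₀ + S = ∑ i, ((if b i < a i ∧ 0 < a i then φ i else 0) +
            (if a i < b i ∧ 0 < b i then φ i else 0) + (if a i = b i ∧ 0 < a i then φ i else 0)) := by
            rw [Finset.sum_add_distrib, Finset.sum_add_distrib, ← hA, ← hB, ← hS]
        _ ≤ ∑ i, (y i 0 + y i 1) := Finset.sum_le_sum fun i _ => (pb i).2.2.2.2.1
        _ = ∑ i, y i 0 + ∑ i, y i 1 := Finset.sum_add_distrib
    · rw [← hx0, ← hx1']
      calc ∑ i, y i 0 + ∑ i, y i 1 = ∑ i, (y i 0 + y i 1) := Finset.sum_add_distrib.symm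
        _ ≤ ∑ i, ((if b i < a i ∧ 0 < a i then φ i else 0) +
            (if a i < b i ∧ 0 < b i then φ i else 0) + (if a i = b i ∧ 0 < a i then φ i else 0) +
            (if a i = 0 ∧ b i < 0 then φ i else 0) + (if b i = 0 ∧ a i < 0 then φ i else 0)) :=
          Finset.sum_le_sum fun i _ => (pb i).2.2.2.2.2
        _ = A₀ + B₀ + S + U + W := by
            rw [Finset.sum_add_distrib, Finset.sum_add_distrib, Finset.sum_add_distrib,
              Finset.sum_add_distrib, ← hA, ← hB, ← hS, ← hU, ← hW]
  -- compute the six extrema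
  have m1 : lam1 (maximizerSet Φ f p) = A₀ := by
    apply zInf_eq
    · exact ⟨x₀, hm0, e00⟩
    · rintro v ⟨x, hx, rfl⟩; exact (hbounds x hx).1
  have m2 : mu1 (maximizerSet Φ f p) = A₀ + S + U := by
    apply zSup_eq
    · exact ⟨xb, hmb, eb0⟩
    · rintro v ⟨x, hx, rfl⟩; exact (hbounds x hx).2.1
  have m3 : lam2 (maximizerSet Φ f p) = B₀ := by
    apply zInf_eq
    · exact ⟨xb, hmb, eb1⟩
    · rintro v ⟨x, hx, rfl⟩; exact (hbounds x hx).2.2.1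
  have m4 : mu2 (maximizerSet Φ f p) = B₀ + S + W := by
    apply zSup_eq
    · exact ⟨xc, hmc, ec1⟩
    · rintro v ⟨x, hx, rfl⟩; exact (hbounds x hx).2.2.2.1
  have m5 : lam0 (maximizerSet Φ f p) = A₀ + B₀ + S := by
    apply zInf_eq
    · exact ⟨x₀, hm0, by show x₀ 0 + x₀ 1 = A₀ + B₀ + S; rw [e00, e01]; ring⟩
    · rintro v ⟨x, hx, rfl⟩; exact (hbounds x hx).2.2.2.2.1
  have m6 : mu0 (maximizerSet Φ f p) = A₀ + B₀ + S + U + W := by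
    apply zSup_eq
    · exact ⟨xd, hmd, by show xd 0 + xd 1 = A₀ + B₀ + S + U + W; rw [ed0, ed1]; ring⟩
    · rintro v ⟨x, hx, rfl⟩; exact (hbounds x hx).2.2.2.2.2
  unfold typeQ
  rw [m1, m2, m3, m4, m5, m6]
  ring
end

section
/- Let (V, w, φ) be an irreducible representation of a bivariate assignment valuation f : T_Φ → ℝ, and let p ∈ ℝ² be such that the maximizer set D_f(p) is two-dimensional. If p = (w(i_p,1), w(i_p,2)) for some i_p ∈ V, then D_f(p) is of positive-type, i_p is the unique vertex of V with p = (w(i_p,1), w(i_p,2)), and ℓ_LH(D_f(p)) − ℓ_UH(D_f(p)) = φ(i_p). -/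
open Finset

/-! ### Auxiliary material for `stmt11` -/

section Stmt11Aux

open Classical

set_option maxHeartbeats 1000000

variable {V : Type} [Fintype V]

/-- reduced weight in coordinate 0 -/
def Aw (w : V → Fin 2 → ℝ) (p : Fin 2 → ℝ) (i : V) : ℝ := w i 0 - p 0
/-- reduced weight in coordinate 1 -/
def Bw (w : V → Fin 2 → ℝ) (p : Fin 2 → ℝ) (i : V) : ℝ := w i 1 - p 1
/-- best reduced weight -/
noncomputable def Mw (w : V → Fin 2 → ℝ) (p : Fin 2 → ℝ) (i : V) : ℝ :=
  max (max (Aw w p i) (Bw w p i)) 0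

lemma Aw_le_Mw (w : V → Fin 2 → ℝ) (p : Fin 2 → ℝ) (i : V) : Aw w p i ≤ Mw w p i :=
  le_trans (le_max_left _ _) (le_max_left _ _)

lemma Bw_le_Mw (w : V → Fin 2 → ℝ) (p : Fin 2 → ℝ) (i : V) : Bw w p i ≤ Mw w p i :=
  le_trans (le_max_right _ _) (le_max_left _ _)

lemma Mw_nonneg (w : V → Fin 2 → ℝ) (p : Fin 2 → ℝ) (i : V) : 0 ≤ Mw w p i :=
  le_max_right _ _

lemma Mw_tri (w : V → Fin 2 → ℝ) (p : Fin 2 → ℝ) (i : V) :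
    Aw w p i = Mw w p i ∨ Bw w p i = Mw w p i ∨ Mw w p i = 0 := by
  rcases max_choice (max (Aw w p i) (Bw w p i)) 0 with h | h
  · rcases max_choice (Aw w p i) (Bw w p i) with h2 | h2
    · left; rw [Mw, h, h2]
    · right; left; rw [Mw, h, h2]
  · right; right; rw [Mw, h]

lemma aux_sum_repr (w : V → Fin 2 → ℝ) (p : Fin 2 → ℝ)
    (x : Fin 2 → ℤ) (y : V → Fin 2 → ℤ) (hsum : ∀ j, ∑ i, y i j = x j) :
    (∑ i, (w i 0 * (y i 0 : ℝ) + w i 1 * (y i 1 : ℝ))) - inner2 p x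
      = ∑ i, (Aw w p i * (y i 0 : ℝ) + Bw w p i * (y i 1 : ℝ)) := by
  have h0 : ((x 0 : ℝ)) = ∑ i, (y i 0 : ℝ) := by rw [← hsum 0]; push_cast; rfl
  have h1 : ((x 1 : ℝ)) = ∑ i, (y i 1 : ℝ) := by rw [← hsum 1]; push_cast; rfl
  simp only [inner2, h0, h1, Finset.mul_sum, Aw, Bw]
  rw [← Finset.sum_add_distrib, ← Finset.sum_sub_distrib]
  apply Finset.sum_congr rfl
  intro i _
  ring

lemma aux_upper (Φ : ℤ) (f : (Fin 2 → ℤ) → ℝ) (w : V → Fin 2 → ℝ) (φ : V → ℤ)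
    (h : IsAssignmentValuation Φ f V w φ) (p : Fin 2 → ℝ)
    {x : Fin 2 → ℤ} (hx : x ∈ TPhi Φ) :
    f x - inner2 p x ≤ ∑ i, (φ i : ℝ) * Mw w p i := by
  obtain ⟨hφ, hΦsum, hval⟩ := h
  obtain ⟨y, ⟨hy0, hy1, hy2⟩, hfx⟩ := (hval x hx).1
  rw [hfx, aux_sum_repr w p x y hy1]
  apply Finset.sum_le_sum
  intro i _
  have hA := Aw_le_Mw w p i
  have hB := Bw_le_Mw w p i
  have h0 := Mw_nonneg w p i
  have hy0' : (0:ℝ) ≤ (y i 0 : ℝ) := by exact_mod_cast hy0 i 0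
  have hy1' : (0:ℝ) ≤ (y i 1 : ℝ) := by exact_mod_cast hy0 i 1
  have hcap : (y i 0 : ℝ) + (y i 1 : ℝ) ≤ (φ i : ℝ) := by exact_mod_cast hy2 i
  nlinarith [mul_nonneg (sub_nonneg.mpr hA) hy0', mul_nonneg (sub_nonneg.mpr hB) hy1',
    mul_nonneg h0 (by linarith : (0:ℝ) ≤ (φ i : ℝ) - (y i 0 : ℝ) - (y i 1 : ℝ))]

end Stmt11Aux

section Stmt11Aux2
open Classical
set_option maxHeartbeats 1000000
set_option linter.unusedSectionVars false
variable {V : Type} [Fintype V]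

lemma aux_attain (Φ : ℤ) (f : (Fin 2 → ℤ) → ℝ) (w : V → Fin 2 → ℝ) (φ : V → ℤ)
    (h : IsAssignmentValuation Φ f V w φ) (p : Fin 2 → ℝ)
    (c : V → Option (Fin 2))
    (hc0 : ∀ i, c i = some 0 → Aw w p i = Mw w p i)
    (hc1 : ∀ i, c i = some 1 → Bw w p i = Mw w p i)
    (hcn : ∀ i, c i = none → Mw w p i = 0) :
    (fun j => ∑ i, if c i = some j then φ i else 0) ∈ maximizerSet Φ f p ∧
    f (fun j => ∑ i, if c i = some j then φ i else 0)
      - inner2 p (fun j => ∑ i, if c i = some j then φ i else 0)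
      = ∑ i, (φ i : ℝ) * Mw w p i := by
  obtain ⟨hφ, hΦsum, hval⟩ := h
  set xc : Fin 2 → ℤ := fun j => ∑ i, if c i = some j then φ i else 0 with hxcdef
  have hxc : xc ∈ TPhi Φ := by
    refine ⟨?_, ?_, ?_⟩
    · apply Finset.sum_nonneg; intro i _; split_ifs; exacts [le_of_lt (hφ i), le_rfl]
    · apply Finset.sum_nonneg; intro i _; split_ifs; exacts [le_of_lt (hφ i), le_rfl]
    · calc xc 0 + xc 1
          = ∑ i, ((if c i = some 0 then φ i else 0) + (if c i = some 1 then φ i else 0)) :=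
            (Finset.sum_add_distrib).symm
        _ ≤ ∑ i, φ i := by
            apply Finset.sum_le_sum
            intro i _
            have := hφ i
            rcases h' : c i with _ | j
            · simp
              omega
            · fin_cases j <;> simp <;> omega
        _ = Φ := hΦsum
  set yc : V → Fin 2 → ℤ := fun i j => if c i = some j then φ i else 0 with hycdef
  have hfeas : FeasibleAssign φ xc yc := by
    refine ⟨?_, ?_, ?_⟩
    · intro i j; simp only [hycdef]; split_ifs; exacts [le_of_lt (hφ i), le_rfl]
    · intro j; rfl
    · intro i
      have := hφ i
      simp only [hycdef]
      rcases h' : c i with _ | j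
      · simp; omega
      · fin_cases j <;> simp <;> omega
  have hge : (∑ i, (w i 0 * (yc i 0 : ℝ) + w i 1 * (yc i 1 : ℝ))) ≤ f xc :=
    (hval xc hxc).2 ⟨yc, hfeas, rfl⟩
  have hvc : (∑ i, (w i 0 * (yc i 0 : ℝ) + w i 1 * (yc i 1 : ℝ))) - inner2 p xc
      = ∑ i, (φ i : ℝ) * Mw w p i := by
    rw [aux_sum_repr w p xc yc (fun j => rfl)]
    apply Finset.sum_congr rfl
    intro i _
    simp only [hycdef]
    rcases h' : c i with _ | j
    · rw [hcn i h']; simp [h']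
    · fin_cases j
      · simp [h']
        rw [hc0 i h']
        ring
      · simp [h']
        rw [hc1 i h']
        ring
  have hub : ∀ z ∈ TPhi Φ, f z - inner2 p z ≤ ∑ i, (φ i : ℝ) * Mw w p i :=
    fun z hz => aux_upper Φ f w φ ⟨hφ, hΦsum, hval⟩ p hz
  have heq : f xc - inner2 p xc = ∑ i, (φ i : ℝ) * Mw w p i :=
    le_antisymm (hub xc hxc) (by linarith)
  exact ⟨⟨hxc, fun z hz => by rw [heq]; exact hub z hz⟩, heq⟩

end Stmt11Aux2

section Stmt11Aux3
open Classical
set_option maxHeartbeats 1000000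
set_option linter.unusedSectionVars false
variable {V : Type} [Fintype V]

/-- canonical optimal choice -/
noncomputable def ccan (w : V → Fin 2 → ℝ) (p : Fin 2 → ℝ) : V → Option (Fin 2) :=
  fun i => if Aw w p i = Mw w p i then some 0
    else if Bw w p i = Mw w p i then some 1 else none

lemma ccan_spec0 (w : V → Fin 2 → ℝ) (p : Fin 2 → ℝ) (i : V) :
    ccan w p i = some 0 → Aw w p i = Mw w p i := by
  unfold ccan; split_ifs <;> simp_all

lemma ccan_spec1 (w : V → Fin 2 → ℝ) (p : Fin 2 → ℝ) (i : V) :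
    ccan w p i = some 1 → Bw w p i = Mw w p i := by
  unfold ccan; split_ifs <;> simp_all

lemma ccan_specn (w : V → Fin 2 → ℝ) (p : Fin 2 → ℝ) (i : V) :
    ccan w p i = none → Mw w p i = 0 := by
  unfold ccan
  split_ifs with h1 h2
  · simp
  · simp
  · intro _
    rcases Mw_tri w p i with h | h | h
    · exact absurd h h1
    · exact absurd h h2
    · exact h

lemma aux_value (Φ : ℤ) (f : (Fin 2 → ℤ) → ℝ) (w : V → Fin 2 → ℝ) (φ : V → ℤ)
    (h : IsAssignmentValuation Φ f V w φ) (p : Fin 2 → ℝ)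
    {x : Fin 2 → ℤ} (hx : x ∈ maximizerSet Φ f p) :
    f x - inner2 p x = ∑ i, (φ i : ℝ) * Mw w p i := by
  have hatt := aux_attain Φ f w φ h p (ccan w p) (ccan_spec0 w p) (ccan_spec1 w p)
    (ccan_specn w p)
  refine le_antisymm (aux_upper Φ f w φ h p hx.1) ?_
  rw [← hatt.2]
  exact hx.2 _ hatt.1.1

lemma aux_tight (Φ : ℤ) (f : (Fin 2 → ℤ) → ℝ) (w : V → Fin 2 → ℝ) (φ : V → ℤ)
    (h : IsAssignmentValuation Φ f V w φ) (p : Fin 2 → ℝ)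
    {x : Fin 2 → ℤ} (hx : x ∈ maximizerSet Φ f p) :
    ∃ y : V → Fin 2 → ℤ, FeasibleAssign φ x y ∧
      ∀ i, (Aw w p i < Mw w p i → y i 0 = 0) ∧
           (Bw w p i < Mw w p i → y i 1 = 0) ∧
           (0 < Mw w p i → y i 0 + y i 1 = φ i) := by
  have hxM := aux_value Φ f w φ h p hx
  obtain ⟨hφ, hΦsum, hval⟩ := h
  obtain ⟨y, hyfeas, hfx⟩ := (hval x hx.1).1
  obtain ⟨hy0, hy1, hy2⟩ := hyfeas
  have hsum : ∑ i, (Aw w p i * (y i 0 : ℝ) + Bw w p i * (y i 1 : ℝ))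
      = ∑ i, (φ i : ℝ) * Mw w p i := by
    rw [← aux_sum_repr w p x y hy1, ← hfx]
    exact hxM
  have hle : ∀ i ∈ Finset.univ,
      (Aw w p i * (y i 0 : ℝ) + Bw w p i * (y i 1 : ℝ)) ≤ (φ i : ℝ) * Mw w p i := by
    intro i _
    have hA := Aw_le_Mw w p i
    have hB := Bw_le_Mw w p i
    have h0 := Mw_nonneg w p i
    have hy0' : (0:ℝ) ≤ (y i 0 : ℝ) := by exact_mod_cast hy0 i 0
    have hy1' : (0:ℝ) ≤ (y i 1 : ℝ) := by exact_mod_cast hy0 i 1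
    have hcap : (y i 0 : ℝ) + (y i 1 : ℝ) ≤ (φ i : ℝ) := by exact_mod_cast hy2 i
    nlinarith [mul_nonneg (sub_nonneg.mpr hA) hy0', mul_nonneg (sub_nonneg.mpr hB) hy1',
      mul_nonneg h0 (by linarith : (0:ℝ) ≤ (φ i : ℝ) - (y i 0 : ℝ) - (y i 1 : ℝ))]
  have hterm := (Finset.sum_eq_sum_iff_of_le hle).mp hsum
  refine ⟨y, ⟨hy0, hy1, hy2⟩, fun i => ?_⟩
  have hi := hterm i (Finset.mem_univ i)
  have hA := Aw_le_Mw w p i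
  have hB := Bw_le_Mw w p i
  have h0 := Mw_nonneg w p i
  have hy0' : (0:ℝ) ≤ (y i 0 : ℝ) := by exact_mod_cast hy0 i 0
  have hy1' : (0:ℝ) ≤ (y i 1 : ℝ) := by exact_mod_cast hy0 i 1
  have hcap : (y i 0 : ℝ) + (y i 1 : ℝ) ≤ (φ i : ℝ) := by exact_mod_cast hy2 i
  have k1 := mul_nonneg (sub_nonneg.mpr hA) hy0'
  have k2 := mul_nonneg (sub_nonneg.mpr hB) hy1'
  have k3 := mul_nonneg h0 (by linarith : (0:ℝ) ≤ (φ i : ℝ) - (y i 0 : ℝ) - (y i 1 : ℝ))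
  refine ⟨?_, ?_, ?_⟩
  · intro hlt
    have h1 : (y i 0 : ℝ) ≤ 0 := by nlinarith
    have : (y i 0 : ℝ) = 0 := le_antisymm h1 hy0'
    exact_mod_cast this
  · intro hlt
    have h1 : (y i 1 : ℝ) ≤ 0 := by nlinarith
    have : (y i 1 : ℝ) = 0 := le_antisymm h1 hy1'
    exact_mod_cast this
  · intro hlt
    have h1 : (φ i : ℝ) ≤ (y i 0 : ℝ) + (y i 1 : ℝ) := by nlinarith
    have : (y i 0 : ℝ) + (y i 1 : ℝ) = (φ i : ℝ) := le_antisymm hcap h1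
    exact_mod_cast this

end Stmt11Aux3

section Stmt11Aux4
open Classical
set_option maxHeartbeats 1000000
set_option linter.unusedSectionVars false
variable {V : Type} [Fintype V]

/-- choice preferring coordinate 1 -/
noncomputable def ccan2 (w : V → Fin 2 → ℝ) (p : Fin 2 → ℝ) : V → Option (Fin 2) :=
  fun i => if Bw w p i = Mw w p i then some 1
    else if Aw w p i = Mw w p i then some 0 else none

lemma ccan2_spec0 (w : V → Fin 2 → ℝ) (p : Fin 2 → ℝ) (i : V) :
    ccan2 w p i = some 0 → Aw w p i = Mw w p i := by
  unfold ccan2; split_ifs <;> simp_all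

lemma ccan2_spec1 (w : V → Fin 2 → ℝ) (p : Fin 2 → ℝ) (i : V) :
    ccan2 w p i = some 1 → Bw w p i = Mw w p i := by
  unfold ccan2; split_ifs <;> simp_all

lemma ccan2_specn (w : V → Fin 2 → ℝ) (p : Fin 2 → ℝ) (i : V) :
    ccan2 w p i = none → Mw w p i = 0 := by
  unfold ccan2
  split_ifs with h1 h2
  · simp
  · simp
  · intro _
    rcases Mw_tri w p i with h | h | h
    · exact absurd h h2
    · exact absurd h h1
    · exact h

/-- choice preferring coordinate 1, then not buying -/
noncomputable def cfew (w : V → Fin 2 → ℝ) (p : Fin 2 → ℝ) : V → Option (Fin 2) :=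
  fun i => if Bw w p i = Mw w p i then some 1
    else if 0 < Mw w p i then some 0 else none

lemma cfew_spec0 (w : V → Fin 2 → ℝ) (p : Fin 2 → ℝ) (i : V) :
    cfew w p i = some 0 → Aw w p i = Mw w p i := by
  unfold cfew
  split_ifs with h1 h2
  · simp
  · intro _
    rcases Mw_tri w p i with h | h | h
    · exact h
    · exact absurd h h1
    · exact absurd (h ▸ h2) (lt_irrefl _)
  · simp

lemma cfew_spec1 (w : V → Fin 2 → ℝ) (p : Fin 2 → ℝ) (i : V) :
    cfew w p i = some 1 → Bw w p i = Mw w p i := by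
  unfold cfew; split_ifs <;> simp_all

lemma cfew_specn (w : V → Fin 2 → ℝ) (p : Fin 2 → ℝ) (i : V) :
    cfew w p i = none → Mw w p i = 0 := by
  unfold cfew
  split_ifs with h1 h2
  · simp
  · simp
  · exact fun _ => le_antisymm (not_lt.mp h2) (Mw_nonneg w p i)

/-- choice preferring coordinate 0, then not buying -/
noncomputable def cfew2 (w : V → Fin 2 → ℝ) (p : Fin 2 → ℝ) : V → Option (Fin 2) :=
  fun i => if Aw w p i = Mw w p i then some 0
    else if 0 < Mw w p i then some 1 else none

lemma cfew2_spec0 (w : V → Fin 2 → ℝ) (p : Fin 2 → ℝ) (i : V) :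
    cfew2 w p i = some 0 → Aw w p i = Mw w p i := by
  unfold cfew2; split_ifs <;> simp_all

lemma cfew2_spec1 (w : V → Fin 2 → ℝ) (p : Fin 2 → ℝ) (i : V) :
    cfew2 w p i = some 1 → Bw w p i = Mw w p i := by
  unfold cfew2
  split_ifs with h1 h2
  · simp
  · intro _
    rcases Mw_tri w p i with h | h | h
    · exact absurd h h1
    · exact h
    · exact absurd (h ▸ h2) (lt_irrefl _)
  · simp

lemma cfew2_specn (w : V → Fin 2 → ℝ) (p : Fin 2 → ℝ) (i : V) :
    cfew2 w p i = none → Mw w p i = 0 := by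
  unfold cfew2
  split_ifs with h1 h2
  · simp
  · simp
  · exact fun _ => le_antisymm (not_lt.mp h2) (Mw_nonneg w p i)

/-- choice buying whenever profitable -/
noncomputable def cbuy (w : V → Fin 2 → ℝ) (p : Fin 2 → ℝ) : V → Option (Fin 2) :=
  fun i => if 0 < Mw w p i then
    (if Aw w p i = Mw w p i then some 0 else some 1) else none

lemma cbuy_spec0 (w : V → Fin 2 → ℝ) (p : Fin 2 → ℝ) (i : V) :
    cbuy w p i = some 0 → Aw w p i = Mw w p i := by
  unfold cbuy; split_ifs <;> simp_all

lemma cbuy_spec1 (w : V → Fin 2 → ℝ) (p : Fin 2 → ℝ) (i : V) :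
    cbuy w p i = some 1 → Bw w p i = Mw w p i := by
  unfold cbuy
  split_ifs with h1 h2
  · simp
  · intro _
    rcases Mw_tri w p i with h | h | h
    · exact absurd h h2
    · exact h
    · exact absurd (h ▸ h1) (lt_irrefl _)
  · simp

lemma cbuy_specn (w : V → Fin 2 → ℝ) (p : Fin 2 → ℝ) (i : V) :
    cbuy w p i = none → Mw w p i = 0 := by
  unfold cbuy
  split_ifs with h1 h2
  · simp
  · simp
  · exact fun _ => le_antisymm (not_lt.mp h1) (Mw_nonneg w p i)

variable (Φ : ℤ) (f : (Fin 2 → ℤ) → ℝ) (w : V → Fin 2 → ℝ) (φ : V → ℤ) (p : Fin 2 → ℝ)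

lemma aux_mu1 (h : IsAssignmentValuation Φ f V w φ) :
    IsGreatest ((fun x => x 0) '' maximizerSet Φ f p)
      (∑ i, if Aw w p i = Mw w p i then φ i else 0) := by
  constructor
  · have hatt := aux_attain Φ f w φ h p (ccan w p) (ccan_spec0 w p) (ccan_spec1 w p)
      (ccan_specn w p)
    refine ⟨_, hatt.1, ?_⟩
    show (∑ i, if ccan w p i = some 0 then φ i else 0) = _
    refine Finset.sum_congr rfl fun i _ => ?_
    unfold ccan
    split_ifs <;> simp_all
  · rintro v ⟨x, hx, rfl⟩
    obtain ⟨y, ⟨hy0, hysum, hycap⟩, hti⟩ := aux_tight Φ f w φ h p hx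
    show x 0 ≤ _
    rw [← hysum 0]
    apply Finset.sum_le_sum
    intro i _
    by_cases hA : Aw w p i = Mw w p i
    · rw [if_pos hA]
      have := hy0 i 1
      have := hycap i
      omega
    · rw [if_neg hA]
      have := (hti i).1 (lt_of_le_of_ne (Aw_le_Mw w p i) hA)
      omega

lemma aux_mu2 (h : IsAssignmentValuation Φ f V w φ) :
    IsGreatest ((fun x => x 1) '' maximizerSet Φ f p)
      (∑ i, if Bw w p i = Mw w p i then φ i else 0) := by
  constructor
  · have hatt := aux_attain Φ f w φ h p (ccan2 w p) (ccan2_spec0 w p) (ccan2_spec1 w p)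
      (ccan2_specn w p)
    refine ⟨_, hatt.1, ?_⟩
    show (∑ i, if ccan2 w p i = some 1 then φ i else 0) = _
    refine Finset.sum_congr rfl fun i _ => ?_
    unfold ccan2
    split_ifs <;> simp_all
  · rintro v ⟨x, hx, rfl⟩
    obtain ⟨y, ⟨hy0, hysum, hycap⟩, hti⟩ := aux_tight Φ f w φ h p hx
    show x 1 ≤ _
    rw [← hysum 1]
    apply Finset.sum_le_sum
    intro i _
    by_cases hB : Bw w p i = Mw w p i
    · rw [if_pos hB]
      have := hy0 i 0
      have := hycap i
      omega
    · rw [if_neg hB]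
      have := (hti i).2.1 (lt_of_le_of_ne (Bw_le_Mw w p i) hB)
      omega

lemma aux_lam1 (h : IsAssignmentValuation Φ f V w φ) :
    IsLeast ((fun x => x 0) '' maximizerSet Φ f p)
      (∑ i, if 0 < Mw w p i ∧ Bw w p i < Mw w p i then φ i else 0) := by
  constructor
  · have hatt := aux_attain Φ f w φ h p (cfew w p) (cfew_spec0 w p) (cfew_spec1 w p)
      (cfew_specn w p)
    refine ⟨_, hatt.1, ?_⟩
    show (∑ i, if cfew w p i = some 0 then φ i else 0) = _
    refine Finset.sum_congr rfl fun i _ => ?_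
    unfold cfew
    by_cases h1 : Bw w p i = Mw w p i
    · have : ¬ (0 < Mw w p i ∧ Bw w p i < Mw w p i) := fun hc => absurd (h1 ▸ hc.2) (lt_irrefl _)
      simp [h1, this]
    · by_cases h2 : 0 < Mw w p i
      · simp [h1, h2, lt_of_le_of_ne (Bw_le_Mw w p i) h1]
      · simp [h1, h2]
  · rintro v ⟨x, hx, rfl⟩
    obtain ⟨y, ⟨hy0, hysum, hycap⟩, hti⟩ := aux_tight Φ f w φ h p hx
    show _ ≤ x 0
    rw [← hysum 0]
    apply Finset.sum_le_sum
    intro i _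
    by_cases hc : 0 < Mw w p i ∧ Bw w p i < Mw w p i
    · rw [if_pos hc]
      have h1 := (hti i).2.1 hc.2
      have h2 := (hti i).2.2 hc.1
      omega
    · rw [if_neg hc]
      exact hy0 i 0

lemma aux_lam2 (h : IsAssignmentValuation Φ f V w φ) :
    IsLeast ((fun x => x 1) '' maximizerSet Φ f p)
      (∑ i, if 0 < Mw w p i ∧ Aw w p i < Mw w p i then φ i else 0) := by
  constructor
  · have hatt := aux_attain Φ f w φ h p (cfew2 w p) (cfew2_spec0 w p) (cfew2_spec1 w p)
      (cfew2_specn w p)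
    refine ⟨_, hatt.1, ?_⟩
    show (∑ i, if cfew2 w p i = some 1 then φ i else 0) = _
    refine Finset.sum_congr rfl fun i _ => ?_
    unfold cfew2
    by_cases h1 : Aw w p i = Mw w p i
    · have : ¬ (0 < Mw w p i ∧ Aw w p i < Mw w p i) := fun hc => absurd (h1 ▸ hc.2) (lt_irrefl _)
      simp [h1, this]
    · by_cases h2 : 0 < Mw w p i
      · simp [h1, h2, lt_of_le_of_ne (Aw_le_Mw w p i) h1]
      · simp [h1, h2]
  · rintro v ⟨x, hx, rfl⟩
    obtain ⟨y, ⟨hy0, hysum, hycap⟩, hti⟩ := aux_tight Φ f w φ h p hx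
    show _ ≤ x 1
    rw [← hysum 1]
    apply Finset.sum_le_sum
    intro i _
    by_cases hc : 0 < Mw w p i ∧ Aw w p i < Mw w p i
    · rw [if_pos hc]
      have h1 := (hti i).1 hc.2
      have h2 := (hti i).2.2 hc.1
      omega
    · rw [if_neg hc]
      exact hy0 i 1

lemma aux_mu0 (h : IsAssignmentValuation Φ f V w φ) :
    IsGreatest ((fun x => x 0 + x 1) '' maximizerSet Φ f p)
      (∑ i, if Aw w p i = Mw w p i ∨ Bw w p i = Mw w p i then φ i else 0) := by
  constructor
  · have hatt := aux_attain Φ f w φ h p (ccan w p) (ccan_spec0 w p) (ccan_spec1 w p)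
      (ccan_specn w p)
    refine ⟨_, hatt.1, ?_⟩
    show (∑ i, if ccan w p i = some 0 then φ i else 0)
        + (∑ i, if ccan w p i = some 1 then φ i else 0) = _
    rw [← Finset.sum_add_distrib]
    refine Finset.sum_congr rfl fun i _ => ?_
    unfold ccan
    split_ifs <;> simp_all
  · rintro v ⟨x, hx, rfl⟩
    obtain ⟨y, ⟨hy0, hysum, hycap⟩, hti⟩ := aux_tight Φ f w φ h p hx
    show x 0 + x 1 ≤ _
    rw [← hysum 0, ← hysum 1, ← Finset.sum_add_distrib]
    apply Finset.sum_le_sum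
    intro i _
    by_cases hc : Aw w p i = Mw w p i ∨ Bw w p i = Mw w p i
    · rw [if_pos hc]
      exact hycap i
    · rw [if_neg hc]
      push_neg at hc
      have h1 := (hti i).1 (lt_of_le_of_ne (Aw_le_Mw w p i) hc.1)
      have h2 := (hti i).2.1 (lt_of_le_of_ne (Bw_le_Mw w p i) hc.2)
      omega

lemma aux_lam0 (h : IsAssignmentValuation Φ f V w φ) :
    IsLeast ((fun x => x 0 + x 1) '' maximizerSet Φ f p)
      (∑ i, if 0 < Mw w p i then φ i else 0) := by
  constructor
  · have hatt := aux_attain Φ f w φ h p (cbuy w p) (cbuy_spec0 w p) (cbuy_spec1 w p)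
      (cbuy_specn w p)
    refine ⟨_, hatt.1, ?_⟩
    show (∑ i, if cbuy w p i = some 0 then φ i else 0)
        + (∑ i, if cbuy w p i = some 1 then φ i else 0) = _
    rw [← Finset.sum_add_distrib]
    refine Finset.sum_congr rfl fun i _ => ?_
    unfold cbuy
    split_ifs <;> simp_all
  · rintro v ⟨x, hx, rfl⟩
    obtain ⟨y, ⟨hy0, hysum, hycap⟩, hti⟩ := aux_tight Φ f w φ h p hx
    show _ ≤ x 0 + x 1
    rw [← hysum 0, ← hysum 1, ← Finset.sum_add_distrib]
    apply Finset.sum_le_sum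
    intro i _
    by_cases hc : 0 < Mw w p i
    · rw [if_pos hc, (hti i).2.2 hc]
    · rw [if_neg hc]
      have := hy0 i 0
      have := hy0 i 1
      omega

end Stmt11Aux4
open Classical
set_option maxHeartbeats 1000000 in
lemma tident (a b : ℝ) (φ : ℤ) :
    (if a = max (max a b) 0 then φ else 0)
      - ((if 0 < max (max a b) 0 then φ else 0)
        - (if 0 < max (max a b) 0 ∧ a < max (max a b) 0 then φ else 0))
      - (((if a = max (max a b) 0 ∨ b = max (max a b) 0 then φ else 0)
          - (if b = max (max a b) 0 then φ else 0))
        - (if 0 < max (max a b) 0 ∧ b < max (max a b) 0 then φ else 0))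
    = if a = 0 ∧ b = 0 then φ else 0 := by
  set m := max (max a b) 0 with hm
  have ham : a ≤ m := le_trans (le_max_left a b) (le_max_left _ _)
  have hbm : b ≤ m := le_trans (le_max_right a b) (le_max_left _ _)
  have h0m : 0 ≤ m := le_max_right _ _
  have htri : a = m ∨ b = m ∨ m = 0 := by
    rcases max_choice (max a b) 0 with h | h
    · rcases max_choice a b with h2 | h2
      · left; rw [hm, h, h2]
      · right; left; rw [hm, h, h2]
    · right; right; rw [hm, h]
  by_cases ha : a = m <;> by_cases hb : b = m <;> by_cases h0 : 0 < m
  · rw [if_pos ha, if_pos h0, if_neg (fun hc => absurd hc.2 (by rw [ha]; exact lt_irrefl m)),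
      if_pos (Or.inl ha), if_pos hb, if_neg (fun hc => absurd hc.2 (by rw [hb]; exact lt_irrefl m)),
      if_neg (fun hc : a = 0 ∧ b = 0 => by rw [hc.1] at ha; exact absurd (ha ▸ h0) (lt_irrefl _))]
    ring
  · have hm0 : m = 0 := le_antisymm (not_lt.mp h0) h0m
    rw [if_pos ha, if_neg h0, if_neg (fun hc => h0 hc.1), if_pos (Or.inl ha), if_pos hb,
      if_neg (fun hc => h0 hc.1), if_pos ⟨by rw [ha, hm0], by rw [hb, hm0]⟩]
    ring
  · have hb' : b < m := lt_of_le_of_ne hbm hb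
    rw [if_pos ha, if_pos h0, if_neg (fun hc => absurd hc.2 (by rw [ha]; exact lt_irrefl m)),
      if_pos (Or.inl ha), if_neg hb, if_pos ⟨h0, hb'⟩,
      if_neg (fun hc : a = 0 ∧ b = 0 => by rw [hc.1] at ha; exact absurd (ha ▸ h0) (lt_irrefl _))]
    ring
  · have hm0 : m = 0 := le_antisymm (not_lt.mp h0) h0m
    rw [if_pos ha, if_neg h0, if_neg (fun hc => h0 hc.1), if_pos (Or.inl ha), if_neg hb,
      if_neg (fun hc => h0 hc.1), if_neg (fun hc : a = 0 ∧ b = 0 => hb (by rw [hc.2, hm0]))]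
    ring
  · have ha' : a < m := lt_of_le_of_ne ham ha
    rw [if_neg ha, if_pos h0, if_pos ⟨h0, ha'⟩, if_pos (Or.inr hb), if_pos hb,
      if_neg (fun hc => absurd hc.2 (by rw [hb]; exact lt_irrefl m)),
      if_neg (fun hc : a = 0 ∧ b = 0 => by rw [hc.2] at hb; exact absurd (hb ▸ h0) (lt_irrefl _))]
    ring
  · have hm0 : m = 0 := le_antisymm (not_lt.mp h0) h0m
    rw [if_neg ha, if_neg h0, if_neg (fun hc => h0 hc.1), if_pos (Or.inr hb), if_pos hb,
      if_neg (fun hc => h0 hc.1), if_neg (fun hc : a = 0 ∧ b = 0 => ha (by rw [hc.1, hm0]))]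
    ring
  · exfalso
    rcases htri with h | h | h
    · exact ha h
    · exact hb h
    · exact absurd (h ▸ h0) (lt_irrefl _)
  · rw [if_neg ha, if_neg h0, if_neg (fun hc => h0 hc.1),
      if_neg (fun hc => hc.elim ha hb), if_neg hb, if_neg (fun hc => h0 hc.1),
      if_neg (fun hc : a = 0 ∧ b = 0 => ha (by rw [hc.1, le_antisymm (not_lt.mp h0) h0m]))]
    ring

theorem stmt11 (Φ : ℤ) (hΦ : 0 < Φ) (f : (Fin 2 → ℤ) → ℝ) (V : Type) [Fintype V]
    (w : V → Fin 2 → ℝ) (φ : V → ℤ) (h : IsAssignmentValuation Φ f V w φ)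
    (hirr : ∀ i j : V, i ≠ j → w i ≠ w j)
    (p : Fin 2 → ℝ) (h2 : TwoDimensional (maximizerSet Φ f p))
    (ip : V) (hip : p = w ip) :
    0 < typeQ (maximizerSet Φ f p) ∧
    (∀ j : V, p = w j → j = ip) ∧
    typeQ (maximizerSet Φ f p) = φ ip := by
  classical
  have hkey : ∀ i : V, (Aw w p i = 0 ∧ Bw w p i = 0) ↔ i = ip := by
    intro i
    constructor
    · rintro ⟨ha, hb⟩
      by_contra hne
      apply hirr i ip hne
      funext j
      have h0 := congrFun hip 0
      have h1 := congrFun hip 1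
      rw [Aw] at ha
      rw [Bw] at hb
      fin_cases j
      · show w i 0 = w ip 0
        linarith
      · show w i 1 = w ip 1
        linarith
    · rintro rfl
      have h0 := congrFun hip 0
      have h1 := congrFun hip 1
      constructor
      · rw [Aw]; linarith
      · rw [Bw]; linarith
  have hQ : typeQ (maximizerSet Φ f p) = φ ip := by
    unfold typeQ mu1 mu2 mu0 lam0 lam1 lam2
    rw [(aux_mu1 Φ f w φ p h).csSup_eq, (aux_mu2 Φ f w φ p h).csSup_eq,
      (aux_mu0 Φ f w φ p h).csSup_eq, (aux_lam0 Φ f w φ p h).csInf_eq,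
      (aux_lam1 Φ f w φ p h).csInf_eq, (aux_lam2 Φ f w φ p h).csInf_eq]
    simp only [← Finset.sum_sub_distrib]
    have hterm : ∀ i : V,
        (if Aw w p i = Mw w p i then φ i else 0)
          - ((if 0 < Mw w p i then φ i else 0)
            - (if 0 < Mw w p i ∧ Aw w p i < Mw w p i then φ i else 0))
          - (((if Aw w p i = Mw w p i ∨ Bw w p i = Mw w p i then φ i else 0)
              - (if Bw w p i = Mw w p i then φ i else 0))
            - (if 0 < Mw w p i ∧ Bw w p i < Mw w p i then φ i else 0))
        = if i = ip then φ i else 0 := by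
      intro i
      have ht := tident (Aw w p i) (Bw w p i) (φ i)
      rw [show max (max (Aw w p i) (Bw w p i)) 0 = Mw w p i from rfl] at ht
      rw [ht, if_congr (hkey i) rfl rfl]
    calc ∑ i : V,
          ((if Aw w p i = Mw w p i then φ i else 0)
            - ((if 0 < Mw w p i then φ i else 0)
              - (if 0 < Mw w p i ∧ Aw w p i < Mw w p i then φ i else 0))
            - (((if Aw w p i = Mw w p i ∨ Bw w p i = Mw w p i then φ i else 0)
                - (if Bw w p i = Mw w p i then φ i else 0))
              - (if 0 < Mw w p i ∧ Bw w p i < Mw w p i then φ i else 0)))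
        = ∑ i : V, if i = ip then φ i else 0 :=
          Finset.sum_congr rfl fun i _ => hterm i
      _ = φ ip := by rw [Finset.sum_ite_eq']; simp
  refine ⟨by rw [hQ]; exact h.1 ip, fun j hj => ?_, hQ⟩
  by_contra hne
  exact hirr j ip hne (hj.symm.trans hip)
end

section
/- Let k ∈ ℤ_{>0}, let a₁, …, a_{3k} be positive integers, let T = (Σ_{i=1}^{3k} a_i)/k be an integer, and suppose T/4 < a_i < T/2 for every i ∈ [3k]. Set Φ = Σ_{i=1}^{3k} a_i, and let f : T_Φ → ℝ be the assignment valuation represented by ([k], w', φ'), where w'(i,1) = w'(i,2) = i for every i ∈ [k] and φ'(i) = T for every i ∈ [k]. Define φ : [3k] → ℤ_{>0} by φ(i) = a_i. Then there exists a weight function w : [3k] × {1,2} → ℝ such that the assignment valuation represented by ([3k], w, φ) equals f if and only if the multiset {a₁, …, a_{3k}} can be partitioned into k disjoint triplets A₁, …, A_k with Σ_{a∈A_i} a = T for every i ∈ [k]. -/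
open Finset

section AuxHexAV

noncomputable def tops (M : Multiset ℝ) (s : ℕ) : ℝ := ((M.sort (· ≥ ·)).take s).sum

lemma sum_le_take_of_sublist {l' l : List ℝ} (hs : List.Sublist l' l) (hl : l.Pairwise (· ≥ ·)) :
    l'.sum ≤ (l.take l'.length).sum := by
  induction hs with
  | slnil => simp
  | cons a h ih =>
    rename_i l₁ l₂
    have hl₂ : l₂.Pairwise (· ≥ ·) := hl.tail
    have ih' := ih hl₂
    refine ih'.trans ?_
    rcases Nat.eq_zero_or_pos l₁.length with h0 | hpos
    · simp [h0]
    · obtain ⟨m, hm⟩ : ∃ m, l₁.length = m + 1 := ⟨l₁.length - 1, by omega⟩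
      have hmlen : m < l₂.length := by
        have := h.length_le; omega
      rw [hm, List.sum_take_succ _ _ hmlen]
      rw [show (a :: l₂).take (m+1) = a :: l₂.take m from rfl]
      rw [List.sum_cons]
      have ha : l₂[m] ≤ a := by
        have := (List.pairwise_cons.mp hl).1
        exact this _ (List.getElem_mem hmlen)
      linarith
  | cons_cons a h ih =>
    rename_i l₁ l₂
    have := ih hl.tail
    simp only [List.length_cons, List.take_succ_cons, List.sum_cons]
    linarith

lemma isGreatest_tops (M : Multiset ℝ) (s : ℕ) (hs : s ≤ Multiset.card M) :
    IsGreatest {r : ℝ | ∃ N ≤ M, Multiset.card N = s ∧ N.sum = r} (tops M s) := by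
  constructor
  · refine ⟨((M.sort (· ≥ ·)).take s : List ℝ), ?_, ?_, ?_⟩
    · have h1 : List.Sublist ((M.sort (· ≥ ·)).take s) (M.sort (· ≥ ·)) := List.take_sublist _ _
      calc ((M.sort (· ≥ ·)).take s : Multiset ℝ) ≤ ((M.sort (· ≥ ·)) : Multiset ℝ) := h1.subperm
        _ = M := Multiset.sort_eq _ _
    · simp [Multiset.sort_eq, hs]
    · simp [tops]
  · rintro r ⟨N, hNM, hcard, rfl⟩
    have hsp : List.Subperm (N.sort (· ≥ ·)) (M.sort (· ≥ ·)) := by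
      have h2 : ((N.sort (· ≥ ·)) : Multiset ℝ) ≤ ((M.sort (· ≥ ·)) : Multiset ℝ) := by
        rw [Multiset.sort_eq, Multiset.sort_eq]; exact hNM
      exact h2
    have hsl := List.sublist_of_subperm_of_pairwise hsp (Multiset.pairwise_sort _ _)
      (Multiset.pairwise_sort _ _)
    have h3 := sum_le_take_of_sublist hsl (Multiset.pairwise_sort _ _)
    have hlen : (N.sort (· ≥ ·)).length = s := by simp [Multiset.sort_eq, hcard]
    have hsum : (N.sort (· ≥ ·)).sum = N.sum := by
      rw [← Multiset.sum_coe, Multiset.sort_eq]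
    rw [hlen, hsum] at h3
    exact h3

lemma multiset_eq_of_tops_eq (M M' : Multiset ℝ) (hcard : Multiset.card M = Multiset.card M')
    (h : ∀ s ≤ Multiset.card M, tops M s = tops M' s) : M = M' := by
  have hlen : (M.sort (· ≥ ·)).length = (M'.sort (· ≥ ·)).length := by
    simp [Multiset.sort_eq, hcard]
  have heq : M.sort (· ≥ ·) = M'.sort (· ≥ ·) := by
    apply List.ext_getElem hlen
    intro i h1 h2
    have hi : i + 1 ≤ Multiset.card M := by
      simp only [← Multiset.length_sort (· ≥ ·)]; omega
    have e1 := List.sum_take_succ (M.sort (· ≥ ·)) i h1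
    have e2 := List.sum_take_succ (M'.sort (· ≥ ·)) i h2
    have t1 := h (i+1) hi
    have t2 := h i (by omega)
    simp only [tops] at t1 t2
    rw [e1, e2, t2] at t1
    linarith
  calc M = ((M.sort (· ≥ ·)) : Multiset ℝ) := (Multiset.sort_eq _ _).symm
    _ = ((M'.sort (· ≥ ·)) : Multiset ℝ) := by rw [heq]
    _ = M' := Multiset.sort_eq _ _

lemma exists_decomp {ι : Type} [DecidableEq ι] (S : Finset ι) (g : ι → Multiset ℝ)
    (N : Multiset ℝ) (hN : N ≤ ∑ i ∈ S, g i) :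
    ∃ F : ι → Multiset ℝ, (∀ i, F i ≤ g i) ∧ ∑ i ∈ S, F i = N := by
  classical
  induction S using Finset.induction_on generalizing N with
  | empty =>
    simp only [Finset.sum_empty, Multiset.le_zero] at hN
    exact ⟨fun _ => 0, fun i => Multiset.zero_le _, by simp [hN]⟩
  | @insert i S hi ih =>
    rw [Finset.sum_insert hi] at hN
    set A := N ∩ g i with hA
    have hAN : A ≤ N := Multiset.inter_le_left
    have hAg : A ≤ g i := Multiset.inter_le_right
    have hrest : N - A ≤ ∑ j ∈ S, g j := by
      rw [Multiset.le_iff_count]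
      intro x
      have h1 := Multiset.le_iff_count.mp hN x
      rw [Multiset.count_add] at h1
      rw [Multiset.count_sub, hA, Multiset.count_inter]
      omega
    obtain ⟨F, hF, hFsum⟩ := ih _ hrest
    refine ⟨Function.update F i A, ?_, ?_⟩
    · intro j
      rcases eq_or_ne j i with rfl | hj
      · simpa using hAg
      · simp [Function.update_of_ne hj, hF j]
    · rw [Finset.sum_insert hi, Function.update_self]
      have heq : ∑ j ∈ S, Function.update F i A j = ∑ j ∈ S, F j := by
        apply Finset.sum_congr rfl
        intro j hj
        exact Function.update_of_ne (fun h : j = i => (h ▸ hi) hj) _ _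
      rw [heq, hFsum, add_comm, tsub_add_cancel_of_le hAN]

lemma card_finsum {ι : Type} (S : Finset ι) (f : ι → Multiset ℝ) :
    Multiset.card (∑ i ∈ S, f i) = ∑ i ∈ S, Multiset.card (f i) := by
  classical
  induction S using Finset.induction_on with
  | empty => simp
  | @insert i S hi ih => rw [Finset.sum_insert hi, Finset.sum_insert hi, Multiset.card_add, ih]

lemma count_finsum {ι : Type} (S : Finset ι) (f : ι → Multiset ℝ) (x : ℝ) :
    Multiset.count x (∑ i ∈ S, f i) = ∑ i ∈ S, Multiset.count x (f i) := by
  classical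
  induction S using Finset.induction_on with
  | empty => simp
  | @insert i S hi ih => rw [Finset.sum_insert hi, Finset.sum_insert hi, Multiset.count_add, ih]

lemma cast_toNat_sum {ι : Type} (S : Finset ι) (b : ι → ℤ) (h : ∀ i ∈ S, 0 ≤ b i) :
    ((∑ i ∈ S, (b i).toNat : ℕ) : ℤ) = ∑ i ∈ S, b i := by
  push_cast
  exact Finset.sum_congr rfl fun i hi => Int.toNat_of_nonneg (h i hi)

lemma split_lemma {ι : Type} [DecidableEq ι] (S : Finset ι) (a : ι → ℤ)
    (ha : ∀ i ∈ S, 0 ≤ a i) :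
    ∀ z0 z1 : ℤ, 0 ≤ z0 → 0 ≤ z1 → z0 + z1 ≤ ∑ i ∈ S, a i →
    ∃ y : ι → Fin 2 → ℤ, (∀ i j, 0 ≤ y i j) ∧ (∀ i ∉ S, y i = 0) ∧
      (∑ i ∈ S, y i 0 = z0) ∧ (∑ i ∈ S, y i 1 = z1) ∧ (∀ i ∈ S, y i 0 + y i 1 ≤ a i) := by
  induction S using Finset.induction_on with
  | empty =>
    intro z0 z1 h0 h1 hsum
    simp only [Finset.sum_empty] at hsum
    refine ⟨fun _ => 0, by simp, by simp, by simp; omega, by simp; omega, by simp⟩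
  | @insert i S hi ih =>
    intro z0 z1 h0 h1 hsum
    have hai : 0 ≤ a i := ha i (Finset.mem_insert_self i S)
    have ha' : ∀ j ∈ S, 0 ≤ a j := fun j hj => ha j (Finset.mem_insert_of_mem hj)
    set u := min z0 (a i) with hu
    set v := min z1 (a i - u) with hv
    have hu0 : 0 ≤ u := le_min h0 hai
    have hv0 : 0 ≤ v := le_min h1 (by omega)
    have huv : u + v ≤ a i := by omega
    have hSnn : 0 ≤ ∑ j ∈ S, a j := Finset.sum_nonneg ha'
    have hsum' : (z0 - u) + (z1 - v) ≤ ∑ j ∈ S, a j := by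
      rw [Finset.sum_insert hi] at hsum
      rcases le_or_gt (a i) z0 with hc | hc
      · have e1 : u = a i := by omega
        have e2 : v = 0 := by omega
        omega
      · rcases le_or_gt (a i - u) z1 with hd | hd
        · have e1 : u + v = a i := by omega
          omega
        · have e1 : z0 - u = 0 := by omega
          have e2 : z1 - v = 0 := by omega
          omega
    obtain ⟨y, hynn, hyout, hy0, hy1, hycap⟩ := ih ha' (z0 - u) (z1 - v) (by omega) (by omega) hsum'
    refine ⟨Function.update y i ![u, v], ?_, ?_, ?_, ?_, ?_⟩
    · intro j jj
      rcases eq_or_ne j i with rfl | hj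
      · rw [Function.update_self]; fin_cases jj <;> simpa
      · rw [Function.update_of_ne hj]; exact hynn j jj
    · intro j hj
      have hj1 : j ≠ i := fun h => hj (h ▸ Finset.mem_insert_self i S)
      have hj2 : j ∉ S := fun h => hj (Finset.mem_insert_of_mem h)
      rw [Function.update_of_ne hj1]; exact hyout j hj2
    · rw [Finset.sum_insert hi, Function.update_self]
      have heq : ∑ j ∈ S, Function.update y i ![u, v] j 0 = ∑ j ∈ S, y j 0 :=
        Finset.sum_congr rfl fun j hj => by
          rw [Function.update_of_ne (fun h : j = i => (h ▸ hi) hj)]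
      rw [heq, hy0]
      simp only [Matrix.cons_val_zero]; omega
    · rw [Finset.sum_insert hi, Function.update_self]
      have heq : ∑ j ∈ S, Function.update y i ![u, v] j 1 = ∑ j ∈ S, y j 1 :=
        Finset.sum_congr rfl fun j hj => by
          rw [Function.update_of_ne (fun h : j = i => (h ▸ hi) hj)]
      rw [heq, hy1]
      simp only [Matrix.cons_val_one, Matrix.head_cons, Matrix.cons_val_zero]; omega
    · intro j hj
      rcases Finset.mem_insert.mp hj with rfl | hjS
      · rw [Function.update_self]; simpa using huv
      · rw [Function.update_of_ne (fun h : j = i => (h ▸ hi) hjS)]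
        exact hycap j hjS

lemma valueSet_eq (n : ℕ) (ω : Fin n → Fin 2 → ℝ) (φ : Fin n → ℤ) (hφ : ∀ i, 0 < φ i)
    (s : ℤ) (hs : 0 ≤ s) :
    {r : ℝ | ∃ y : Fin n → Fin 2 → ℤ, FeasibleAssign φ ![s,0] y ∧
       r = ∑ i, (ω i 0 * (y i 0 : ℝ) + ω i 1 * (y i 1 : ℝ))} =
    {r : ℝ | ∃ N ≤ ∑ i : Fin n, Multiset.replicate (φ i).toNat (ω i 0),
       Multiset.card N = s.toNat ∧ N.sum = r} := by
  ext r
  constructor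
  · rintro ⟨y, ⟨hnn, hsum, hcap⟩, rfl⟩
    have hy1 : ∀ i, y i 1 = 0 := by
      intro i
      have h0 : ∑ i, y i 1 = 0 := by simpa using hsum 1
      have h1 := (Finset.sum_eq_zero_iff_of_nonneg (fun i _ => hnn i 1)).mp h0
      exact h1 i (Finset.mem_univ i)
    refine ⟨∑ i : Fin n, Multiset.replicate (y i 0).toNat (ω i 0), ?_, ?_, ?_⟩
    · apply Finset.sum_le_sum
      intro i _
      apply (Multiset.replicate_le_replicate _).mpr
      have := hcap i
      rw [hy1 i] at this
      omega
    · rw [card_finsum]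
      simp only [Multiset.card_replicate]
      have h0 : ∑ i, y i 0 = s := by simpa using hsum 0
      have h2 : ((∑ i, (y i 0).toNat : ℕ) : ℤ) = s := by
        push_cast
        rw [← h0]
        apply Finset.sum_congr rfl
        intro i _
        exact Int.toNat_of_nonneg (hnn i 0)
      omega
    · rw [Multiset.sum_sum]
      apply Finset.sum_congr rfl
      intro i _
      rw [Multiset.sum_replicate, nsmul_eq_mul, hy1 i]
      have h3 : ((y i 0).toNat : ℝ) = ((y i 0 : ℤ) : ℝ) := by
        have := Int.toNat_of_nonneg (hnn i 0)
        exact_mod_cast congrArg (fun z : ℤ => (z : ℝ)) this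
      rw [h3]
      push_cast
      ring
  · rintro ⟨N, hNM, hcard, rfl⟩
    obtain ⟨F, hF, hFsum⟩ := exists_decomp Finset.univ _ N hNM
    have hrep : ∀ i, F i = Multiset.replicate (Multiset.card (F i)) (ω i 0) := by
      intro i
      rw [Multiset.eq_replicate_card]
      intro b hb
      exact Multiset.eq_of_mem_replicate (Multiset.mem_of_le (hF i) hb)
    have h0 : (∑ i, (Multiset.card (F i) : ℤ)) = s := by
      have h1 : ((∑ i, Multiset.card (F i) : ℕ) : ℤ) = s := by
        rw [← card_finsum, hFsum, hcard, Int.toNat_of_nonneg hs]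
      push_cast at h1
      exact h1
    refine ⟨fun i => ![(Multiset.card (F i) : ℤ), 0], ⟨?_, ?_, ?_⟩, ?_⟩
    · intro i j
      fin_cases j <;> simp
    · intro j
      fin_cases j
      · simpa using h0
      · simp
    · intro i
      simp only [Matrix.cons_val_zero, Matrix.cons_val_one, Matrix.head_cons, add_zero]
      have h1 : Multiset.card (F i) ≤ (φ i).toNat := by
        have := Multiset.card_le_card (hF i)
        simpa using this
      have := hφ i
      omega
    · rw [← hFsum, Multiset.sum_sum]
      apply Finset.sum_congr rfl
      intro i _
      rw [hrep i, Multiset.sum_replicate, nsmul_eq_mul]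
      simp
      ring

end AuxHexAV

theorem stmt13 (k : ℕ) (hk : 0 < k) (a : Fin (3 * k) → ℤ) (ha : ∀ i, 0 < a i)
    (T : ℤ) (hT : (k : ℤ) * T = ∑ i, a i)
    (hbound : ∀ i, T < 4 * a i ∧ 2 * a i < T)
    (Φ : ℤ) (hΦ : Φ = ∑ i, a i)
    (f : (Fin 2 → ℤ) → ℝ)
    (hf : IsAssignmentValuation Φ f (Fin k)
      (fun i _ => ((i : ℕ) : ℝ) + 1) (fun _ => T)) :
    (∃ w : Fin (3 * k) → Fin 2 → ℝ,
        IsAssignmentValuation Φ f (Fin (3 * k)) w (fun i => a i)) ↔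
    (∃ π : Fin (3 * k) → Fin k, ∀ c : Fin k,
        (Finset.univ.filter (fun i => π i = c)).card = 3 ∧
        ∑ i ∈ Finset.univ.filter (fun i => π i = c), a i = T) := by
  classical
  have hkpos : 0 < 3 * k := by omega
  have hT3 : 3 ≤ T := by
    have h1 := (hbound ⟨0, hkpos⟩).2
    have h2 := ha ⟨0, hkpos⟩
    omega
  have hΦnn : 0 ≤ Φ := by
    rw [hΦ]; exact Finset.sum_nonneg (fun i _ => (ha i).le)
  constructor
  · rintro ⟨w, hw⟩
    set Mstd : Multiset ℝ := ∑ i : Fin k, Multiset.replicate T.toNat (((i : ℕ) : ℝ) + 1)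
      with hMstd
    set Mw : Multiset ℝ := ∑ i : Fin (3*k), Multiset.replicate (a i).toNat (w i 0) with hMw
    have hcards : ((Multiset.card Mstd : ℕ) : ℤ) = Φ := by
      rw [hMstd, card_finsum]
      simp only [Multiset.card_replicate]
      rw [Finset.sum_const, Finset.card_univ, Fintype.card_fin, smul_eq_mul]
      push_cast
      rw [Int.toNat_of_nonneg (by omega : (0:ℤ) ≤ T), hT, ← hΦ]
    have hcardw : ((Multiset.card Mw : ℕ) : ℤ) = Φ := by
      rw [hMw, card_finsum]
      simp only [Multiset.card_replicate]
      rw [cast_toNat_sum _ _ (fun i _ => (ha i).le)]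
      exact hΦ.symm
    have hcardeq : Multiset.card Mstd = Multiset.card Mw := by omega
    have htops : ∀ s : ℕ, s ≤ Multiset.card Mstd → tops Mstd s = tops Mw s := by
      intro s hs
      have hsZ : (s : ℤ) ≤ Φ := by omega
      have hx : (![(s:ℤ), 0]) ∈ TPhi Φ := by
        refine ⟨by simp, by simp, ?_⟩
        simpa using hsZ
      have h2 := hw.2.2 _ hx
      have h1 := hf.2.2 _ hx
      rw [valueSet_eq (3*k) w (fun i => a i) ha (s:ℤ) (Int.natCast_nonneg s)] at h2
      rw [valueSet_eq k (fun i _ => ((i:ℕ):ℝ) + 1) (fun _ => T) (fun _ => by change (0:ℤ) < T; omega) (s:ℤ)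
        (Int.natCast_nonneg s)] at h1
      simp only [Int.toNat_natCast] at h1 h2
      have g1 := isGreatest_tops Mstd s hs
      have g2 := isGreatest_tops Mw s (by omega)
      exact (g1.unique h1).trans (h2.unique g2)
    have hMeq : Mstd = Mw := multiset_eq_of_tops_eq _ _ hcardeq htops
    have hmem : ∀ i : Fin (3*k), ∃ c : Fin k, w i 0 = ((c:ℕ):ℝ) + 1 := by
      intro i
      have h1 : w i 0 ∈ Mw := by
        rw [hMw]
        exact Multiset.mem_sum.mpr ⟨i, Finset.mem_univ i,
          Multiset.mem_replicate.mpr ⟨by have := ha i; omega, rfl⟩⟩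
      rw [← hMeq, hMstd] at h1
      obtain ⟨c, _, hc⟩ := Multiset.mem_sum.mp h1
      exact ⟨c, Multiset.eq_of_mem_replicate hc⟩
    choose π hπ using hmem
    refine ⟨π, fun c => ?_⟩
    have e1 : Multiset.count (((c:ℕ):ℝ)+1) Mstd = T.toNat := by
      rw [hMstd, count_finsum]
      rw [Finset.sum_eq_single c]
      · rw [Multiset.count_replicate, if_pos rfl]
      · intro b _ hb
        rw [Multiset.count_replicate, if_neg]
        intro hcb
        apply hb
        have hbc : (b:ℕ) = (c:ℕ) := by
          have : ((c:ℕ):ℝ) = ((b:ℕ):ℝ) := by linarith [hcb]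
          exact_mod_cast this.symm
        exact Fin.ext hbc
      · intro h; exact absurd (Finset.mem_univ c) h
    have e2 : Multiset.count (((c:ℕ):ℝ)+1) Mw
        = ∑ i ∈ Finset.univ.filter (fun i => π i = c), (a i).toNat := by
      rw [hMw, count_finsum, Finset.sum_filter]
      apply Finset.sum_congr rfl
      intro i _
      rw [Multiset.count_replicate, hπ i]
      by_cases hic : π i = c
      · rw [if_pos (by rw [hic]), if_pos hic]
      · rw [if_neg, if_neg hic]
        intro hcb
        apply hic
        have hbc : ((π i : ℕ)) = (c : ℕ) := by
          have : ((c:ℕ):ℝ) = ((π i:ℕ):ℝ) := by linarith [hcb]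
          exact_mod_cast this.symm
        exact Fin.ext hbc
    have e3 : T.toNat = ∑ i ∈ Finset.univ.filter (fun i => π i = c), (a i).toNat := by
      rw [← e1, ← e2, hMeq]
    have e4 := cast_toNat_sum (Finset.univ.filter (fun i => π i = c)) a (fun i _ => (ha i).le)
    have hsumT : ∑ i ∈ Finset.univ.filter (fun i => π i = c), a i = T := by
      have e5 : ((T.toNat : ℕ) : ℤ)
          = ((∑ i ∈ Finset.univ.filter (fun i => π i = c), (a i).toNat : ℕ) : ℤ) := by
        exact_mod_cast congrArg (fun n : ℕ => (n : ℤ)) e3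
      rw [e4, Int.toNat_of_nonneg (by omega : (0:ℤ) ≤ T)] at e5
      exact e5.symm
    refine ⟨?_, hsumT⟩
    have hnn : (0:ℤ) ≤ ((Finset.univ.filter (fun i => π i = c)).card : ℤ) :=
      Int.natCast_nonneg _
    have hb1 : 2 * T ≤ ((Finset.univ.filter (fun i => π i = c)).card : ℤ) * (T - 1) := by
      have h1 : ∑ i ∈ Finset.univ.filter (fun i => π i = c), (2 * a i)
          ≤ ∑ _i ∈ Finset.univ.filter (fun i => π i = c), (T - 1) :=
        Finset.sum_le_sum fun i _ => by have := (hbound i).2; omega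
      rw [← Finset.mul_sum, hsumT, Finset.sum_const, nsmul_eq_mul] at h1
      exact h1
    have hb2 : ((Finset.univ.filter (fun i => π i = c)).card : ℤ) * (T + 1) ≤ 4 * T := by
      have h1 : ∑ _i ∈ Finset.univ.filter (fun i => π i = c), (T + 1)
          ≤ ∑ i ∈ Finset.univ.filter (fun i => π i = c), (4 * a i) :=
        Finset.sum_le_sum fun i _ => by have := (hbound i).1; omega
      rw [← Finset.mul_sum, hsumT, Finset.sum_const, nsmul_eq_mul] at h1
      exact h1
    have hge : 3 ≤ ((Finset.univ.filter (fun i => π i = c)).card : ℤ) := by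
      by_contra hcon
      push_neg at hcon
      have h2 : ((Finset.univ.filter (fun i => π i = c)).card : ℤ) ≤ 2 := by omega
      nlinarith
    have hle : ((Finset.univ.filter (fun i => π i = c)).card : ℤ) ≤ 3 := by
      by_contra hcon
      push_neg at hcon
      have h2 : 4 ≤ ((Finset.univ.filter (fun i => π i = c)).card : ℤ) := by omega
      nlinarith
    omega
  · rintro ⟨π, hπ⟩
    refine ⟨fun i _ => ((π i : ℕ) : ℝ) + 1, ha, hΦ.symm, ?_⟩
    intro x hx
    have hmain := hf.2.2 x hx
    constructor
    · obtain ⟨z, ⟨hznn, hzsum, hzcap⟩, hzval⟩ := hmain.1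
      have hsplit : ∀ c : Fin k, ∃ y : Fin (3*k) → Fin 2 → ℤ, (∀ i j, 0 ≤ y i j) ∧
          (∀ i ∉ Finset.univ.filter (fun i => π i = c), y i = 0) ∧
          (∑ i ∈ Finset.univ.filter (fun i => π i = c), y i 0 = z c 0) ∧
          (∑ i ∈ Finset.univ.filter (fun i => π i = c), y i 1 = z c 1) ∧
          (∀ i ∈ Finset.univ.filter (fun i => π i = c), y i 0 + y i 1 ≤ a i) := by
        intro c
        apply split_lemma _ a (fun i _ => (ha i).le) _ _ (hznn c 0) (hznn c 1)
        rw [(hπ c).2]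
        exact hzcap c
      choose Y hY using hsplit
      have hcc : ∀ (c : Fin k) (j : Fin 2),
          ∑ i ∈ Finset.univ.filter (fun i => π i = c), Y (π i) i j = z c j := by
        intro c j
        have e : ∑ i ∈ Finset.univ.filter (fun i => π i = c), Y (π i) i j
            = ∑ i ∈ Finset.univ.filter (fun i => π i = c), Y c i j :=
          Finset.sum_congr rfl fun i hi => by rw [(Finset.mem_filter.mp hi).2]
        rw [e]
        fin_cases j
        · exact (hY c).2.2.1
        · exact (hY c).2.2.2.1
      refine ⟨fun i => Y (π i) i, ⟨?_, ?_, ?_⟩, ?_⟩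
      · intro i j; exact (hY (π i)).1 i j
      · intro j
        rw [← hzsum j, ← Finset.sum_fiberwise Finset.univ π (fun i => Y (π i) i j)]
        exact Finset.sum_congr rfl fun c _ => hcc c j
      · intro i
        exact (hY (π i)).2.2.2.2 i (Finset.mem_filter.mpr ⟨Finset.mem_univ i, rfl⟩)
      · show f x = ∑ i, ((((π i : ℕ):ℝ) + 1) * ((Y (π i) i 0 : ℤ) : ℝ)
            + (((π i : ℕ):ℝ) + 1) * ((Y (π i) i 1 : ℤ) : ℝ))
        rw [hzval, ← Finset.sum_fiberwise Finset.univ π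
          (fun i => (((π i : ℕ):ℝ) + 1) * ((Y (π i) i 0 : ℤ) : ℝ)
            + (((π i : ℕ):ℝ) + 1) * ((Y (π i) i 1 : ℤ) : ℝ))]
        apply Finset.sum_congr rfl
        intro c _
        have e : ∀ j : Fin 2, ∑ i ∈ Finset.univ.filter (fun i => π i = c),
            ((((π i : ℕ):ℝ) + 1) * ((Y (π i) i j : ℤ) : ℝ))
            = (((c : ℕ):ℝ) + 1) * ((z c j : ℤ) : ℝ) := by
          intro j
          have e1 : ∑ i ∈ Finset.univ.filter (fun i => π i = c),
              ((((π i : ℕ):ℝ) + 1) * ((Y (π i) i j : ℤ) : ℝ))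
              = ∑ i ∈ Finset.univ.filter (fun i => π i = c),
              ((((c : ℕ):ℝ) + 1) * ((Y (π i) i j : ℤ) : ℝ)) :=
            Finset.sum_congr rfl fun i hi => by rw [(Finset.mem_filter.mp hi).2]
          rw [e1, ← Finset.mul_sum, ← hcc c j]
          push_cast
          ring
        rw [Finset.sum_add_distrib, e 0, e 1]
    · rintro r ⟨y, ⟨hynn, hysum, hycap⟩, rfl⟩
      apply hmain.2
      refine ⟨fun c j => ∑ i ∈ Finset.univ.filter (fun i => π i = c), y i j, ⟨?_, ?_, ?_⟩, ?_⟩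
      · intro c j; exact Finset.sum_nonneg fun i _ => hynn i j
      · intro j; rw [← hysum j]; exact Finset.sum_fiberwise _ _ _
      · intro c
        rw [← Finset.sum_add_distrib]
        calc ∑ i ∈ Finset.univ.filter (fun i => π i = c), (y i 0 + y i 1)
            ≤ ∑ i ∈ Finset.univ.filter (fun i => π i = c), a i :=
              Finset.sum_le_sum fun i _ => hycap i
          _ = T := (hπ c).2
      · show ∑ i, ((((π i : ℕ):ℝ) + 1) * ((y i 0 : ℤ) : ℝ)
            + (((π i : ℕ):ℝ) + 1) * ((y i 1 : ℤ) : ℝ))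
            = ∑ c : Fin k, ((((c : ℕ):ℝ) + 1)
                * ((∑ i ∈ Finset.univ.filter (fun i => π i = c), y i 0 : ℤ) : ℝ)
              + (((c : ℕ):ℝ) + 1)
                * ((∑ i ∈ Finset.univ.filter (fun i => π i = c), y i 1 : ℤ) : ℝ))
        rw [← Finset.sum_fiberwise Finset.univ π
          (fun i => (((π i : ℕ):ℝ) + 1) * ((y i 0 : ℤ) : ℝ)
            + (((π i : ℕ):ℝ) + 1) * ((y i 1 : ℤ) : ℝ))]
        apply Finset.sum_congr rfl
        intro c _
        have e : ∀ j : Fin 2, ∑ i ∈ Finset.univ.filter (fun i => π i = c),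
            ((((π i : ℕ):ℝ) + 1) * ((y i j : ℤ) : ℝ))
            = (((c : ℕ):ℝ) + 1)
              * (((∑ i ∈ Finset.univ.filter (fun i => π i = c), y i j : ℤ)) : ℝ) := by
          intro j
          have e1 : ∑ i ∈ Finset.univ.filter (fun i => π i = c),
              ((((π i : ℕ):ℝ) + 1) * ((y i j : ℤ) : ℝ))
              = ∑ i ∈ Finset.univ.filter (fun i => π i = c),
              ((((c : ℕ):ℝ) + 1) * ((y i j : ℤ) : ℝ)) :=
            Finset.sum_congr rfl fun i hi => by rw [(Finset.mem_filter.mp hi).2]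
          rw [e1, ← Finset.mul_sum]
          push_cast
          ring
        rw [Finset.sum_add_distrib, e 0, e 1]
end
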